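/- arXiv:2203.02693 — 10 statements merged into one kernel-verified Lean document; each statement's English description precedes it below -/
import Mathlib

section
/- Let n ≥ 1 and let J ⊆ {0,1,…,n} be a finite set with 0 ∈ J, n ∈ J and mei(J) < n. Set ε := mei(J)/(n − mei(J)). Then the associated point set S_J is an ε-approximation of the continuous Pareto front {(x, n−x) : x ∈ [0, n]} (and hence also of the discrete front {(i, n−i) : i ∈ {0,…,n}}); that is, for every real ρ ∈ [0, n] there exists j ∈ J with (1+ε)·j ≥ ρ and (1+ε)·(n−j) ≥ n−ρ. -/
/-- For `a ∈ J`, the distance from `a` to the next larger element of `J`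
(`0` if `a` is the maximum of `J`). -/
def gapAfter (J : Finset ℕ) (a : ℕ) : ℕ :=
  ((J.filter (fun b => a < b)).min.untopD a) - a

/-- The maximal empty interval size of `J`: listing the elements of `J` in increasing
order as `j_1 < j_2 < … < j_m`, this is `max_{1 ≤ a ≤ m-1} (j_{a+1} - j_a)`. -/
def mei (J : Finset ℕ) : ℕ := J.sup (fun a => gapAfter J a)

lemma next_elem (J : Finset ℕ) (n : ℕ) (hnJ : n ∈ J) (j : ℕ) (hj : j ∈ J) (hjn : j < n) :
    ∃ j' ∈ J, j < j' ∧ j' ≤ j + mei J := by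
  have hne : (J.filter (fun b => j < b)).Nonempty := ⟨n, Finset.mem_filter.2 ⟨hnJ, hjn⟩⟩
  obtain ⟨j', hj'⟩ := Finset.min_of_nonempty hne
  have hmem := Finset.mem_of_min hj'
  rw [Finset.mem_filter] at hmem
  refine ⟨j', hmem.1, hmem.2, ?_⟩
  have hgap : gapAfter J j = j' - j := by
    unfold gapAfter
    rw [hj']
    rfl
  have hle : gapAfter J j ≤ mei J := Finset.le_sup hj
  omega

/-- Lemma 2: if `J ⊆ {0,…,n}` contains `0` and `n` and `ε = mei(J)/(n - mei(J))`,
then the point set `S_J = {(j, n-j) : j ∈ J}` is an `ε`-approximation of the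
continuous Pareto front `{(ρ, n-ρ) : ρ ∈ [0,n]}` of OneMinMax. -/
theorem stmt2 (n : ℕ) (hn : 1 ≤ n) (J : Finset ℕ)
    (hJ : ∀ j ∈ J, j ≤ n) (h0 : 0 ∈ J) (hnJ : n ∈ J) (hmei : mei J < n)
    (ε : ℝ) (hε : ε = (mei J : ℝ) / ((n : ℝ) - (mei J : ℝ))) :
    ∀ ρ : ℝ, 0 ≤ ρ → ρ ≤ n →
      ∃ j ∈ J, (1 + ε) * (j : ℝ) ≥ ρ ∧ (1 + ε) * ((n : ℝ) - (j : ℝ)) ≥ (n : ℝ) - ρ := by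
  intro ρ hρ0 hρn
  set m : ℕ := mei J with hmdef
  have hmn : (m : ℝ) < n := by exact_mod_cast hmei
  have hnm : (0:ℝ) < (n:ℝ) - (m:ℝ) := by linarith
  have hε0 : 0 ≤ ε := by rw [hε]; positivity
  have h1εpos : (0:ℝ) < 1 + ε := by linarith
  have hεnm : (1 + ε) * ((n:ℝ) - m) = n := by
    rw [hε]; field_simp; ring
  set L : ℝ := ρ / (1 + ε) with hL
  have hLnonneg : 0 ≤ L := div_nonneg hρ0 h1εpos.le
  have hLeq : (1 + ε) * L = ρ := by
    rw [hL]; field_simp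
  have hLle : L ≤ (n:ℝ) - m := by nlinarith
  set T : Finset ℕ := J.filter (fun j => (j:ℝ) ≤ L + m) with hT
  have hTne : T.Nonempty := ⟨0, Finset.mem_filter.2 ⟨h0, by push_cast; positivity⟩⟩
  set j : ℕ := T.max' hTne with hj
  have hjT : j ∈ T := T.max'_mem hTne
  have hjJ : j ∈ J := (Finset.mem_filter.1 hjT).1
  have hjub : (j:ℝ) ≤ L + m := (Finset.mem_filter.1 hjT).2
  have hjL : L ≤ (j:ℝ) := by
    by_contra h
    push_neg at h
    have hjn : j < n := by
      have : (j:ℝ) < (n:ℝ) := by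
        have hm0 : (0:ℝ) ≤ m := Nat.cast_nonneg m
        linarith
      exact_mod_cast this
    obtain ⟨j', hj'J, hlt, hle⟩ := next_elem J n hnJ j hjJ hjn
    have hj'T : j' ∈ T := by
      refine Finset.mem_filter.2 ⟨hj'J, ?_⟩
      have : (j':ℝ) ≤ (j:ℝ) + m := by exact_mod_cast hle
      linarith
    have := Finset.le_max' T j' hj'T
    omega
  refine ⟨j, hjJ, ?_, ?_⟩
  · nlinarith
  · nlinarith
end

section
/- Let n ≥ 2 and N ≥ 3 be natural numbers, and set g := ⌈n/(N−1)⌉. Then g < n, and there exists a finite set J ⊆ {0,1,…,n} with 0 ∈ J, n ∈ J and |J| ≤ N such that the associated point set S_J is an ε-approximation of the continuous Pareto front {(x, n−x) : x ∈ [0, n]} for ε = g/(n−g). (Corollary 1: ε_opt(N) ≤ mei_opt(N)/(n − mei_opt(N)).) -/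
/-- Corollary 1: for `n ≥ 2`, `N ≥ 3` and `g = ⌈n/(N-1)⌉` one has `g < n`, and there
is a set `J ⊆ {0,…,n}` with `0, n ∈ J` and `|J| ≤ N` whose associated point set
`S_J = {(j, n-j) : j ∈ J}` is an `ε`-approximation of the continuous Pareto front
`{(ρ, n-ρ) : ρ ∈ [0,n]}` for `ε = g/(n-g)`. -/
theorem stmt3 (n N : ℕ) (hn : 2 ≤ n) (hN : 3 ≤ N) (g : ℕ)
    (hg : (g : ℤ) = ⌈(n : ℚ) / ((N : ℚ) - 1)⌉) :
    g < n ∧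
    ∃ J : Finset ℕ, (∀ j ∈ J, j ≤ n) ∧ 0 ∈ J ∧ n ∈ J ∧ J.card ≤ N ∧
      ∀ ρ : ℝ, 0 ≤ ρ → ρ ≤ n →
        ∃ j ∈ J, (1 + (g : ℝ) / ((n : ℝ) - (g : ℝ))) * (j : ℝ) ≥ ρ ∧
          (1 + (g : ℝ) / ((n : ℝ) - (g : ℝ))) * ((n : ℝ) - (j : ℝ)) ≥ (n : ℝ) - ρ := by
  have hNQ : (1:ℚ) < (N:ℚ) := by exact_mod_cast (by omega : 1 < N)
  have hNpos : (0:ℚ) < (N:ℚ) - 1 := by linarith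
  have hn2 : (2:ℚ) ≤ (n:ℚ) := by exact_mod_cast hn
  have hNQ3 : (3:ℚ) ≤ (N:ℚ) := by exact_mod_cast hN
  have hg1 : 1 ≤ g := by
    have h0 : (0:ℤ) < (g:ℤ) := by
      rw [hg]
      exact Int.ceil_pos.mpr (div_pos (by linarith) hNpos)
    exact_mod_cast h0
  have hgn : g < n := by
    have h0 : (g:ℤ) ≤ (n:ℤ) - 1 := by
      rw [hg]
      apply Int.ceil_le.mpr
      push_cast
      rw [div_le_iff₀ hNpos]
      nlinarith
    have h1 : (g:ℤ) < (n:ℤ) := by omega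
    exact_mod_cast h1
  have hNg : n ≤ (N-1)*g := by
    have h0 : (n:ℚ)/((N:ℚ)-1) ≤ (g:ℚ) := by
      have h1 := Int.le_ceil ((n:ℚ)/((N:ℚ)-1))
      rw [← hg] at h1
      exact_mod_cast h1
    have h2 : (n:ℚ) ≤ ((N:ℚ)-1) * (g:ℚ) := by
      rw [div_le_iff₀ hNpos] at h0; linarith
    have h3 : ((N-1:ℕ):ℚ) = (N:ℚ) - 1 := by
      have h4 : 1 ≤ N := by omega
      push_cast [h4]
      ring
    rw [← h3] at h2
    exact_mod_cast h2
  refine ⟨hgn, (Finset.range N).image (fun i => min (i*g) n), ?_, ?_, ?_, ?_, ?_⟩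
  · intro j hj
    obtain ⟨i, _, rfl⟩ := Finset.mem_image.mp hj
    exact min_le_right _ _
  · exact Finset.mem_image.mpr ⟨0, Finset.mem_range.mpr (by omega), by simp⟩
  · exact Finset.mem_image.mpr ⟨N-1, Finset.mem_range.mpr (by omega), min_eq_right hNg⟩
  · exact le_trans Finset.card_image_le (by simp)
  · intro ρ hρ0 hρn
    have hG : (0:ℝ) < (g:ℝ) := by exact_mod_cast (by omega : 0 < g)
    have hgnR : (g:ℝ) < (n:ℝ) := by exact_mod_cast hgn
    have hD : (0:ℝ) < (n:ℝ) - (g:ℝ) := by linarith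
    have hnR : (0:ℝ) < (n:ℝ) := by linarith
    have key : ∀ x y : ℝ, y * ((n:ℝ)-(g:ℝ)) ≤ (n:ℝ) * x →
        (1 + (g:ℝ)/((n:ℝ)-(g:ℝ))) * x ≥ y := by
      intro x y h
      have h1 : (1 + (g:ℝ)/((n:ℝ)-(g:ℝ))) = (n:ℝ)/((n:ℝ)-(g:ℝ)) := by
        field_simp
        ring
      rw [ge_iff_le, h1, div_mul_eq_mul_div, le_div_iff₀ hD]
      linarith
    set k := ⌊ρ / (g:ℝ)⌋₊ with hkdef
    have hk1 : (k:ℝ) * (g:ℝ) ≤ ρ := by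
      rw [← le_div_iff₀ hG]
      exact Nat.floor_le (div_nonneg hρ0 hG.le)
    have hk2 : ρ < ((k:ℝ)+1) * (g:ℝ) := by
      rw [← div_lt_iff₀ hG]
      exact Nat.lt_floor_add_one _
    by_cases hcase : ρ * ((n:ℝ)-(g:ℝ)) ≤ (n:ℝ) * ((k:ℝ)*(g:ℝ))
    · -- use j = k*g
      have hkgn : k * g ≤ n := by
        have h5 : ((k*g:ℕ):ℝ) ≤ (n:ℝ) := by push_cast; nlinarith
        exact_mod_cast h5
      have hkN : k < N := by
        have h6 : k * g ≤ (N-1) * g := le_trans hkgn hNg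
        have h7 : k ≤ N - 1 := Nat.le_of_mul_le_mul_right h6 (by omega)
        omega
      refine ⟨k*g, Finset.mem_image.mpr ⟨k, Finset.mem_range.mpr hkN,
        min_eq_left hkgn⟩, ?_, ?_⟩
      · apply key
        push_cast
        linarith
      · apply key
        push_cast
        nlinarith [mul_nonneg (sub_nonneg.mpr hρn) hG.le,
          mul_nonneg (sub_nonneg.mpr hk1) hnR.le]
    · push_neg at hcase
      have hρDn : ρ * ((n:ℝ)-(g:ℝ)) ≤ (n:ℝ) * ((n:ℝ)-(g:ℝ)) :=
        mul_le_mul_of_nonneg_right hρn hD.le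
      have hkglt : ((k:ℝ)+1)*(g:ℝ) < (n:ℝ) := by nlinarith
      have hkg1n : (k+1) * g ≤ n := by
        have h5 : (((k+1)*g:ℕ):ℝ) < (n:ℝ) := by push_cast; linarith
        exact le_of_lt (by exact_mod_cast h5)
      have hkN : k+1 < N := by
        have h6 : (k+1) * g ≤ (N-1) * g := le_trans hkg1n hNg
        have h7 : k+1 ≤ N - 1 := Nat.le_of_mul_le_mul_right h6 (by omega)
        omega
      refine ⟨(k+1)*g, Finset.mem_image.mpr ⟨k+1, Finset.mem_range.mpr hkN,
        min_eq_left hkg1n⟩, ?_, ?_⟩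
      · apply key
        push_cast
        nlinarith [mul_le_mul_of_nonneg_right hk2.le hD.le,
          mul_nonneg (mul_nonneg (by positivity : (0:ℝ) ≤ (k:ℝ)+1) hG.le) hG.le]
      · apply key
        push_cast
        nlinarith [hcase]
end

section
/- Let n ≥ 1, let ε ≥ 0 be a real number, and let J ⊆ {0,1,…,n} be a finite set with 0 ∈ J and n ∈ J such that the associated point set S_J is an ε-approximation of the discrete Pareto front {(i, n−i) : i ∈ {0,…,n}}, i.e., for every i ∈ {0,…,n} there exists j ∈ J with (1+ε)·j ≥ i and (1+ε)·(n−j) ≥ n−i. Then ε·(n − mei(J)) ≥ mei(J) − 1. (Lemma 3: ε ≥ (mei(S)−1)/(n − mei(S)).) -/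
lemma gapAfter_spec (J : Finset ℕ) (a : ℕ) (h : 0 < gapAfter J a) :
    a + gapAfter J a ∈ J ∧ ∀ j ∈ J, a < j → a + gapAfter J a ≤ j := by
  unfold gapAfter at *
  rcases hFm : (J.filter (fun b => a < b)).min with _ | b <;> rw [hFm] at h
  · have : WithTop.untopD a (none : WithTop ℕ) = a := rfl
    rw [this] at h; omega
  · have hbF : b ∈ J.filter (fun b => a < b) := Finset.mem_of_min hFm
    simp only [Finset.mem_filter] at hbF
    have hab : a < b := hbF.2
    have huntop : (WithTop.untopD a (some b : WithTop ℕ)) = b := rfl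
    rw [huntop]
    constructor
    · have : a + (b - a) = b := by omega
      rw [this]; exact hbF.1
    · intro j hj haj
      have : (Finset.filter (fun b => a < b) J).min ≤ (j : WithTop ℕ) :=
        Finset.min_le (by simp [Finset.mem_filter, hj, haj])
      rw [hFm] at this
      have hbj : b ≤ j := by
        rw [show (some b : WithTop ℕ) = (b : WithTop ℕ) from rfl] at this
        exact_mod_cast this
      omega


set_option maxHeartbeats 1000000 in
/-- Lemma 3: if `J ⊆ {0,…,n}` contains `0` and `n` and its point set
`S_J = {(j, n-j) : j ∈ J}` is an `ε`-approximation of the discrete Pareto front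
`{(i, n-i) : i ∈ {0,…,n}}` of OneMinMax, then `ε ≥ (mei(J) - 1)/(n - mei(J))`,
stated as `ε·(n - mei(J)) ≥ mei(J) - 1`. -/
theorem stmt4 (n : ℕ) (hn : 1 ≤ n) (ε : ℝ) (hε : 0 ≤ ε)
    (J : Finset ℕ) (hJ : ∀ j ∈ J, j ≤ n) (h0 : 0 ∈ J) (hnJ : n ∈ J)
    (happrox : ∀ i : ℕ, i ≤ n →
      ∃ j ∈ J, (1 + ε) * (j : ℝ) ≥ (i : ℝ) ∧
        (1 + ε) * ((n : ℝ) - (j : ℝ)) ≥ (n : ℝ) - (i : ℝ)) :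
    ε * ((n : ℝ) - (mei J : ℝ)) ≥ (mei J : ℝ) - 1 := by
  set g := mei J with hgdef
  -- bound: g ≤ n
  have hgn : g ≤ n := by
    refine Finset.sup_le fun a ha => ?_
    by_cases h : 0 < gapAfter J a
    · have := (gapAfter_spec J a h).1
      have := hJ _ this
      omega
    · omega
  by_cases hg1 : g ≤ 1
  · have h1 : (g : ℝ) ≤ 1 := by exact_mod_cast hg1
    have h2 : (g : ℝ) ≤ (n : ℝ) := by exact_mod_cast hgn
    nlinarith
  push_neg at hg1
  -- the gap is attained at some a
  obtain ⟨a, haJ, hga⟩ := Finset.exists_mem_eq_sup J ⟨0, h0⟩ (fun a => gapAfter J a)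
  have hga2 : gapAfter J a = g := hga.symm
  have hgpos : 0 < gapAfter J a := by omega
  obtain ⟨hbJ, hmin⟩ := gapAfter_spec J a hgpos
  rw [hga2] at hbJ hmin
  have hbn : a + g ≤ n := hJ _ hbJ
  by_cases hgeqn : g = n
  · -- then a = 0 and J has no elements strictly between 0 and n
    exfalso
    have ha0 : a = 0 := by omega
    obtain ⟨j, hjJ, hj1, hj2⟩ := happrox 1 hn
    rcases le_or_gt j a with hja | hja
    · have : j = 0 := by omega
      subst this
      simp at hj1
      linarith
    · have hbj : a + g ≤ j := hmin j hjJ hja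
      have hjn : j = n := by have := hJ j hjJ; omega
      have hJn : (j:ℝ) = (n:ℝ) := by exact_mod_cast hjn
      rw [hJn] at hj2
      have h2 : (2:ℝ) ≤ (n:ℝ) := by exact_mod_cast (by omega : 2 ≤ n)
      have h3 : (1 + ε) * ((n:ℝ) - (n:ℝ)) = 0 := by ring
      rw [h3] at hj2
      push_cast at hj2
      linarith
  -- main case : 2 ≤ g < n
  have hgn' : g < n := by omega
  set d := n - g with hd
  have hdpos : 0 < d := by omega
  have had : a ≤ d := by omega
  set x := a * (n - 1) with hx
  set c := (x + d - 1) / d with hc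
  set i := max (a + 1) c with hi
  -- nat facts
  have hclow : x ≤ c * d := by
    have h1 := Nat.div_add_mod (x + d - 1) d
    rw [← hc] at h1
    have h2 : (x + d - 1) % d < d := Nat.mod_lt _ hdpos
    have h3 : d * c = c * d := Nat.mul_comm _ _
    rw [h3] at h1
    generalize c * d = m at h1 ⊢
    omega
  have hchigh : c * d ≤ x + d - 1 := Nat.div_mul_le_self _ _
  have hxb : x ≤ (a + g - 1) * d := by
    have h1 : n - 1 = d + (g - 1) := by omega
    have h2 : a + g - 1 = a + (g - 1) := by omega
    rw [hx, h1, h2, Nat.mul_add, Nat.add_mul]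
    have : a * (g - 1) ≤ (g - 1) * d :=
      le_trans (Nat.mul_le_mul_right _ had) (le_of_eq (Nat.mul_comm _ _))
    omega
  have hcb : c < a + g := by
    rw [hc, Nat.div_lt_iff_lt_mul hdpos]
    have h1 : (a + g) * d = (a + g - 1) * d + d := by
      have h2 : a + g - 1 + 1 = a + g := by omega
      calc (a + g) * d = (a + g - 1 + 1) * d := by rw [h2]
        _ = (a + g - 1) * d + d := Nat.succ_mul _ _
    omega
  have hiab : i < a + g := max_lt (by omega) hcb
  have hia : a + 1 ≤ i := le_max_left _ _
  have hin : i ≤ n := by omega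
  have hilow : x ≤ i * d := le_trans hclow (Nat.mul_le_mul_right _ (le_max_right _ _))
  have hihigh : i * d ≤ x + d := by
    rcases max_cases (a + 1) c with ⟨h1, _⟩ | ⟨h1, _⟩ <;> rw [hi, h1]
    · have : a * d ≤ x := by
        rw [hx]; exact Nat.mul_le_mul_left _ (by omega)
      calc (a+1) * d = a * d + d := by rw [Nat.succ_mul]
        _ ≤ x + d := by omega
    · omega
  clear_value g d x c i
  clear hga hga2 hgpos hclow hchigh hxb hcb hc
  -- cast to reals
  have hNg : (g : ℝ) ≤ (n : ℝ) := by exact_mod_cast hgn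
  have hD : (d : ℝ) = (n : ℝ) - (g : ℝ) := by
    rw [hd]; push_cast [Nat.cast_sub (le_of_lt hgn')]; ring
  have hDpos : (0:ℝ) < (d : ℝ) := by exact_mod_cast hdpos
  have hX : (x : ℝ) = (a : ℝ) * ((n : ℝ) - 1) := by
    rw [hx]; push_cast [Nat.cast_sub hn]; ring
  have hIlow : (x : ℝ) ≤ (i : ℝ) * (d : ℝ) := by exact_mod_cast hilow
  have hIhigh : (i : ℝ) * (d : ℝ) ≤ (x : ℝ) + (d : ℝ) := by exact_mod_cast hihigh
  have hIa : (a : ℝ) + 1 ≤ (i : ℝ) := by exact_mod_cast hia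
  have hIb : (i : ℝ) < (a : ℝ) + (g : ℝ) := by exact_mod_cast hiab
  have hG2 : (2 : ℝ) ≤ (g : ℝ) := by exact_mod_cast hg1
  have hBn : (a : ℝ) + (g : ℝ) ≤ (n : ℝ) := by exact_mod_cast hbn
  obtain ⟨j, hjJ, hj1, hj2⟩ := happrox i hin
  clear happrox
  have hjn : (j : ℝ) ≤ (n : ℝ) := by exact_mod_cast hJ j hjJ
  rcases le_or_gt j a with hja | hja
  · -- j ≤ a
    have hjA : (j : ℝ) ≤ (a : ℝ) := by exact_mod_cast hja
    by_cases ha0 : a = 0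
    · exfalso
      have : (j : ℝ) = 0 := by
        have : j = 0 := by omega
        exact_mod_cast this
      rw [this] at hj1
      have hA0 : (a : ℝ) = 0 := by exact_mod_cast ha0
      nlinarith
    · -- a ≥ 1
      have hApos : (0:ℝ) < (a : ℝ) := by
        have : 0 < a := Nat.pos_of_ne_zero ha0
        exact_mod_cast this
      have hmul : (1 + ε) * (j:ℝ) ≤ (1 + ε) * (a:ℝ) :=
        mul_le_mul_of_nonneg_left hjA (by linarith)
      have key : (i:ℝ) ≤ (1 + ε) * (a:ℝ) := le_trans hj1 hmul
      have key2 : (a : ℝ) * ((n : ℝ) - 1) ≤ (1 + ε) * (a : ℝ) * (d : ℝ) := by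
        have h4 : (i:ℝ) * (d:ℝ) ≤ (1 + ε) * (a:ℝ) * (d:ℝ) :=
          mul_le_mul_of_nonneg_right key (le_of_lt hDpos)
        linarith [hIlow, hX ▸ hIlow]
      have hnd : (n : ℝ) - 1 = (d : ℝ) + (g : ℝ) - 1 := by rw [hD]; ring
      have h7 : 0 ≤ (a:ℝ) * (ε * (d:ℝ) - ((g:ℝ) - 1)) := by nlinarith [key2]
      have h8 : 0 ≤ ε * (d:ℝ) - ((g:ℝ) - 1) :=
        (mul_nonneg_iff_of_pos_left hApos).mp h7
      rw [hD] at h8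
      linarith
  · -- j ≥ a + g
    have hbj : a + g ≤ j := hmin j hjJ hja
    have hBj : (a : ℝ) + (g : ℝ) ≤ (j : ℝ) := by exact_mod_cast hbj
    have hmul : (1 + ε) * ((n:ℝ) - (j:ℝ)) ≤ (1 + ε) * ((n:ℝ) - ((a:ℝ) + (g:ℝ))) :=
      mul_le_mul_of_nonneg_left (by linarith) (by linarith)
    have key : (n:ℝ) - (i:ℝ) ≤ (1 + ε) * ((n:ℝ) - ((a:ℝ) + (g:ℝ))) := le_trans hj2 hmul
    have hNIpos : (0:ℝ) < (n : ℝ) - (i : ℝ) := by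
      have h5 : i < n := by omega
      have h6 : (i:ℝ) < (n:ℝ) := by exact_mod_cast h5
      linarith
    have hNB : (0:ℝ) < (n:ℝ) - ((a:ℝ) + (g:ℝ)) := by
      by_contra h
      push_neg at h
      have : (1 + ε) * ((n:ℝ) - ((a:ℝ) + (g:ℝ))) ≤ 0 :=
        mul_nonpos_iff.mpr (Or.inl ⟨by linarith, h⟩)
      linarith
    have key2 : ((n:ℝ) - 1) * ((n:ℝ) - ((a:ℝ) + (g:ℝ))) ≤ ((n:ℝ) - (i:ℝ)) * (d:ℝ) := by
      have hid : ((n:ℝ) - 1) * ((n:ℝ) - ((a:ℝ) + (g:ℝ))) =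
          (n:ℝ) * (d:ℝ) - (a:ℝ) * ((n:ℝ) - 1) - (d:ℝ) := by
        rw [hD]; ring
      rw [hid]
      have h9 : (i:ℝ) * (d:ℝ) ≤ (a:ℝ) * ((n:ℝ) - 1) + (d:ℝ) := by
        rw [← hX]; exact hIhigh
      nlinarith
    have key3 : ((n:ℝ) - (i:ℝ)) * (d:ℝ) ≤ (1 + ε) * ((n:ℝ) - ((a:ℝ) + (g:ℝ))) * (d:ℝ) :=
      mul_le_mul_of_nonneg_right key (le_of_lt hDpos)
    have hnd : (n : ℝ) - 1 = (d : ℝ) + (g : ℝ) - 1 := by rw [hD]; ring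
    have h7 : 0 ≤ ((n:ℝ) - ((a:ℝ) + (g:ℝ))) * (ε * (d:ℝ) - ((g:ℝ) - 1)) := by
      nlinarith [key2, key3]
    have h8 : 0 ≤ ε * (d:ℝ) - ((g:ℝ) - 1) :=
      (mul_nonneg_iff_of_pos_left hNB).mp h7
    rw [hD] at h8
    linarith
end

section
/- Let n ≥ 2 and N ≥ 3 be natural numbers and set g := ⌈n/(N−1)⌉. Let ε ≥ 0 be real and let J ⊆ {0,1,…,n} be a finite set with 0 ∈ J, n ∈ J and |J| ≤ N such that the associated point set S_J is an ε-approximation of the discrete Pareto front {(i, n−i) : i ∈ {0,…,n}}. Then ε·(n − g) ≥ g − 1. (Corollary 2: ε_opt(N) ≥ (mei_opt(N)−1)/(n − mei_opt(N)).) -/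
/-- Chain lemma: if from every element of `J` below `n` we can step forward by at most `d`
to another element of `J`, then starting from `j` we can build a subset of `J` of elements
`≥ j` whose size certifies reaching `n`. -/
lemma stmt5_chain (n d : ℕ) (J : Finset ℕ)
    (H : ∀ j ∈ J, j < n → ∃ j' ∈ J, j < j' ∧ j' ≤ j + d) :
    ∀ m : ℕ, ∀ j ∈ J, n ≤ j + m →
      ∃ S : Finset ℕ, S ⊆ J ∧ (∀ s ∈ S, j ≤ s) ∧ 1 ≤ S.card ∧
        n ≤ j + (S.card - 1) * d := by
  intro m
  induction m with
  | zero =>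
    intro j hj hm
    exact ⟨{j}, by simpa using hj, by simp, by simp, by simpa using hm⟩
  | succ m ih =>
    intro j hj hm
    by_cases hjn : n ≤ j
    · exact ⟨{j}, by simpa using hj, by simp, by simp, by simpa using hjn⟩
    · obtain ⟨j', hj'J, hlt, hle⟩ := H j hj (lt_of_not_ge hjn)
      obtain ⟨S, hSJ, hSge, hS1, hSn⟩ := ih j' hj'J (by omega)
      have hjS : j ∉ S := fun h => absurd (hSge j h) (by omega)
      refine ⟨insert j S, Finset.insert_subset hj hSJ, ?_, ?_, ?_⟩
      · intro s hs
        rcases Finset.mem_insert.mp hs with h | h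
        · omega
        · exact le_of_lt (lt_of_lt_of_le hlt (hSge s h))
      · simp [Finset.card_insert_of_notMem hjS]
      · have hc : (insert j S).card = S.card + 1 := Finset.card_insert_of_notMem hjS
        have hmul : S.card * d = (S.card - 1) * d + d := by
          have : S.card - 1 + 1 = S.card := Nat.succ_pred_eq_of_pos hS1
          calc S.card * d = (S.card - 1 + 1) * d := by rw [this]
            _ = (S.card - 1) * d + d := by ring
        have : n ≤ j + S.card * d := by
          calc n ≤ j' + (S.card - 1) * d := hSn
            _ ≤ (j + d) + (S.card - 1) * d := by omega
            _ = j + S.card * d := by omega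
        simpa [hc] using this

/-- Corollary 2: for `n ≥ 2`, `N ≥ 3` and `g = ⌈n/(N-1)⌉`, if `J ⊆ {0,…,n}` contains
`0` and `n`, has at most `N` elements, and its point set `S_J = {(j, n-j) : j ∈ J}`
is an `ε`-approximation of the discrete Pareto front `{(i, n-i) : i ∈ {0,…,n}}`,
then `ε ≥ (g - 1)/(n - g)`, stated as `ε·(n - g) ≥ g - 1`. -/
theorem stmt5 (n N : ℕ) (hn : 2 ≤ n) (hN : 3 ≤ N) (g : ℕ)
    (hg : (g : ℤ) = ⌈(n : ℚ) / ((N : ℚ) - 1)⌉)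
    (ε : ℝ) (hε : 0 ≤ ε)
    (J : Finset ℕ) (hJ : ∀ j ∈ J, j ≤ n) (h0 : 0 ∈ J) (hnJ : n ∈ J)
    (hcard : J.card ≤ N)
    (happrox : ∀ i : ℕ, i ≤ n →
      ∃ j ∈ J, (1 + ε) * (j : ℝ) ≥ (i : ℝ) ∧
        (1 + ε) * ((n : ℝ) - (j : ℝ)) ≥ (n : ℝ) - (i : ℝ)) :
    ε * ((n : ℝ) - (g : ℝ)) ≥ (g : ℝ) - 1 := by
  have hNq : (1:ℚ) < (N:ℚ) - 1 := by
    have : (3:ℚ) ≤ (N:ℚ) := by exact_mod_cast hN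
    linarith
  have hNq0 : (0:ℚ) < (N:ℚ) - 1 := by linarith
  -- g ≥ 1
  have hg1 : 1 ≤ g := by
    have hx : (0:ℚ) < (n:ℚ) / ((N:ℚ) - 1) := by
      apply div_pos _ hNq0
      exact_mod_cast (by omega : 0 < n)
    have : (1:ℤ) ≤ (g:ℤ) := by
      rw [hg]; exact Int.ceil_pos.mpr hx
    exact_mod_cast this
  -- (g-1)*(N-1) < n in ℚ
  have hgq : ((g:ℚ) - 1) * ((N:ℚ) - 1) < (n:ℚ) := by
    have hlt : ((g:ℤ) : ℚ) < (n:ℚ) / ((N:ℚ) - 1) + 1 := by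
      rw [hg]; exact_mod_cast Int.ceil_lt_add_one ((n:ℚ) / ((N:ℚ) - 1))
    have h1 : ((g:ℚ) - 1) < (n:ℚ) / ((N:ℚ) - 1) := by push_cast at hlt; linarith
    exact (lt_div_iff₀ hNq0).mp h1
  rcases Nat.lt_or_ge g 2 with hg2 | hg2
  · -- g = 1 : trivial
    have : g = 1 := by omega
    subst this
    have hn1 : (1:ℝ) ≤ (n:ℝ) := by exact_mod_cast (by omega : 1 ≤ n)
    have : 0 ≤ ε * ((n:ℝ) - 1) := mul_nonneg hε (by linarith)
    push_cast
    linarith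
  -- main case: g ≥ 2. Find a gap of size ≥ g.
  have hgap : ∃ j ∈ J, j < n ∧ ∀ u ∈ J, j < u → j + g ≤ u := by
    by_contra h
    push_neg at h
    have H : ∀ j ∈ J, j < n → ∃ j' ∈ J, j < j' ∧ j' ≤ j + (g - 1) := by
      intro j hj hjn
      obtain ⟨u, huJ, hju, hug⟩ := h j hj hjn
      exact ⟨u, huJ, hju, by omega⟩
    obtain ⟨S, hSJ, -, hS1, hSn⟩ := stmt5_chain n (g - 1) J H n 0 h0 (by omega)
    have hSc : S.card ≤ N := le_trans (Finset.card_le_card hSJ) hcard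
    have hnle : n ≤ (N - 1) * (g - 1) :=
      le_trans (by simpa using hSn) (Nat.mul_le_mul_right _ (by omega))
    have hq : (n:ℚ) ≤ ((N:ℚ) - 1) * ((g:ℚ) - 1) := by
      have := hnle
      have hcast : (((N - 1) * (g - 1) : ℕ) : ℚ) = ((N:ℚ) - 1) * ((g:ℚ) - 1) := by
        push_cast [Nat.cast_sub (by omega : 1 ≤ N), Nat.cast_sub hg1]
        ring
      calc (n:ℚ) ≤ (((N - 1) * (g - 1) : ℕ) : ℚ) := by exact_mod_cast this
        _ = _ := hcast
    nlinarith [hgq, hq]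
  obtain ⟨j, hjJ, hjn, hjgap⟩ := hgap
  have hjg : j + g ≤ n := hjgap n hnJ hjn
  have hjle : (j:ℝ) ≤ (n:ℝ) - (g:ℝ) := by
    have : ((j + g : ℕ) : ℝ) ≤ (n:ℝ) := by exact_mod_cast hjg
    push_cast at this
    linarith
  by_cases ha : (g:ℝ) - 1 ≤ ε * (j:ℝ)
  · have hmono : ε * (j:ℝ) ≤ ε * ((n:ℝ) - (g:ℝ)) :=
      mul_le_mul_of_nonneg_left hjle hε
    linarith
  push_neg at ha
  set a := ε * (j:ℝ) with ha_def
  have ha0 : 0 ≤ a := mul_nonneg hε (Nat.cast_nonneg _)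
  set k := Nat.floor a + 1 with hk_def
  have hkle : k ≤ g - 1 := by
    have hfl : Nat.floor a < g - 1 := by
      rw [Nat.floor_lt ha0]
      have : ((g - 1 : ℕ) : ℝ) = (g:ℝ) - 1 := by
        push_cast [Nat.cast_sub hg1]; ring
      rw [this]; exact ha
    omega
  have hkcast : (k:ℝ) = (Nat.floor a : ℝ) + 1 := by rw [hk_def]; push_cast; ring
  have hkg : (k:ℝ) ≤ (g:ℝ) - 1 := by
    have h : k + 1 ≤ g := by omega
    have h' := (Nat.cast_le (α := ℝ)).mpr h
    push_cast at h'
    rw [hkcast]; linarith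
  obtain ⟨u, huJ, hu1, hu2⟩ := happrox (j + k) (by omega)
  push_cast at hu1 hu2
  have hak : a < (Nat.floor a : ℝ) + 1 := Nat.lt_floor_add_one a
  have huc : u ≤ j ∨ j + g ≤ u := by
    rcases le_or_gt u j with h | h
    · exact Or.inl h
    · exact Or.inr (hjgap u huJ h)
  rcases huc with hu | hu
  · exfalso
    have huj : (u:ℝ) ≤ (j:ℝ) := by exact_mod_cast hu
    have h2 : ε * (u:ℝ) ≤ a := mul_le_mul_of_nonneg_left huj hε
    -- (1+ε)*u ≥ j + k, so j + k ≤ u + ε*u ≤ j + a < j + k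
    nlinarith [hu1, hak, huj, h2]
  · have hun : u ≤ n := hJ u huJ
    have hujg : (j:ℝ) + (g:ℝ) ≤ (u:ℝ) := by
      have : ((j + g : ℕ) : ℝ) ≤ (u:ℝ) := by exact_mod_cast hu
      push_cast at this; linarith
    have h2 : (g:ℝ) - (k:ℝ) ≤ ε * ((n:ℝ) - (u:ℝ)) := by
      rw [hkcast]; nlinarith [hu2, hujg]
    have h3 : ε * ((n:ℝ) - (u:ℝ)) ≤ ε * ((n:ℝ) - (j:ℝ) - (g:ℝ)) :=
      mul_le_mul_of_nonneg_left (by linarith) hε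
    have hfloor : (k:ℝ) ≤ a + 1 := by
      rw [hkcast]; linarith [Nat.floor_le ha0]
    have expand : ε * ((n:ℝ) - (g:ℝ)) = a + ε * ((n:ℝ) - (j:ℝ) - (g:ℝ)) := by
      rw [ha_def]; ring
    linarith
end

section
/- Let n ≥ 1, let r₁, r₂ ≤ 0 be real numbers, and let J ⊆ {0,1,…,n} be a finite set with 0 ∈ J and n ∈ J, with elements listed in increasing order as j_1 < j_2 < … < j_m. Then the two-dimensional Lebesgue measure of the union ⋃_{a=1}^{m} [r₁, j_a] × [r₂, n−j_a] equals A − Σ_{a=2}^{m} (j_a − j_{a−1})²/2, where A := −r₁·n − r₂·n + r₁·r₂ + n²/2. (Exact hypervolume formula for OneMinMax, equation (1) of the paper.) -/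
open MeasureTheory

/-- The hypervolume of the point set `{(j, n-j) : j ∈ J}` with respect to the
reference point `(r₁, r₂)`: the two-dimensional Lebesgue measure of
`⋃_{j ∈ J} [r₁, j] × [r₂, n-j]`. -/
noncomputable def HV (n : ℕ) (J : Finset ℕ) (r₁ r₂ : ℝ) : ℝ :=
  (volume (⋃ j ∈ J, Set.Icc r₁ (j : ℝ) ×ˢ Set.Icc r₂ ((n : ℝ) - (j : ℝ)))).toReal

open Set in
lemma gapAfter_eq_of (J : Finset ℕ) (a k : ℕ) (hk : k ∈ J) (hak : a < k)
    (hmin : ∀ b ∈ J, a < b → k ≤ b) : gapAfter J a = k - a := by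
  have h : (J.filter (fun b => a < b)).Nonempty := ⟨k, by simp [hk, hak]⟩
  have : (J.filter (fun b => a < b)).min' h = k := by
    apply le_antisymm
    · exact Finset.min'_le _ _ (by simp [hk, hak])
    · apply Finset.le_min'
      intro y hy
      simp only [Finset.mem_filter] at hy
      exact hmin y hy.1 hy.2
  unfold gapAfter
  rw [← Finset.coe_min' h, WithTop.untopD_coe, this]

lemma gapAfter_max (J : Finset ℕ) (a : ℕ) (h : ∀ b ∈ J, b ≤ a) : gapAfter J a = 0 := by
  have : J.filter (fun b => a < b) = ∅ := by
    apply Finset.filter_eq_empty_iff.mpr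
    intro b hb
    exact not_lt.mpr (h b hb)
  unfold gapAfter
  simp [this]

open Set in
lemma HV_insert (n : ℕ) (r₁ r₂ : ℝ) (hr₁ : r₁ ≤ 0) (hr₂ : r₂ ≤ 0)
    (J : Finset ℕ) (hJ : ∀ j ∈ J, j ≤ n) (k p q : ℕ) (hkn : k ≤ n)
    (hk : k ∉ J) (hp : p ∈ J) (hq : q ∈ J) (hpk : p < k) (hkq : k < q)
    (hgl : ∀ j ∈ J, j < k → j ≤ p) (hgr : ∀ j ∈ J, k < j → q ≤ j) :
    HV n (insert k J) r₁ r₂ = HV n J r₁ r₂ + ((k : ℝ) - p) * ((q : ℝ) - k) := by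
  have hqn : q ≤ n := hJ q hq
  have hpkR : (p : ℝ) < k := by exact_mod_cast hpk
  have hkqR : (k : ℝ) < q := by exact_mod_cast hkq
  have hqnR : (q : ℝ) ≤ n := by exact_mod_cast hqn
  have hknR : (k : ℝ) ≤ n := by exact_mod_cast hkn
  have hpR : (0 : ℝ) ≤ p := Nat.cast_nonneg p
  set S : Set (ℝ × ℝ) := Ioc (p : ℝ) (k : ℝ) ×ˢ Ioc ((n : ℝ) - q) ((n : ℝ) - k) with hS
  have hU : (⋃ j ∈ (insert k J : Finset ℕ), Icc r₁ (j : ℝ) ×ˢ Icc r₂ ((n : ℝ) - (j : ℝ)))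
      = S ∪ ⋃ j ∈ J, Icc r₁ (j : ℝ) ×ˢ Icc r₂ ((n : ℝ) - (j : ℝ)) := by
    ext ⟨x, y⟩
    simp only [Set.mem_iUnion, Finset.mem_insert, Set.mem_union, Set.mem_prod, Set.mem_Icc,
      Set.mem_Ioc, exists_prop, hS]
    constructor
    · rintro ⟨j, hj | hj, ⟨hx1, hx2⟩, hy1, hy2⟩
      · subst hj
        by_cases hxp : x ≤ (p : ℝ)
        · refine Or.inr ⟨p, hp, ⟨hx1, hxp⟩, hy1, by linarith⟩
        · by_cases hyq : y ≤ (n : ℝ) - q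
          · exact Or.inr ⟨q, hq, ⟨hx1, by linarith⟩, hy1, hyq⟩
          · exact Or.inl ⟨⟨lt_of_not_ge hxp, hx2⟩, lt_of_not_ge hyq, hy2⟩
      · exact Or.inr ⟨j, hj, ⟨hx1, hx2⟩, hy1, hy2⟩
    · rintro (⟨⟨hx1, hx2⟩, hy1, hy2⟩ | ⟨j, hj, ⟨hx1, hx2⟩, hy1, hy2⟩)
      · exact ⟨k, Or.inl rfl, ⟨by linarith, hx2⟩, ⟨by linarith, hy2⟩⟩
      · exact ⟨j, Or.inr hj, ⟨hx1, hx2⟩, hy1, hy2⟩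
  have hmU : MeasurableSet (⋃ j ∈ J, Icc r₁ (j : ℝ) ×ˢ Icc r₂ ((n : ℝ) - (j : ℝ))) := by
    exact MeasurableSet.biUnion (Set.to_countable _)
      (fun j _ => measurableSet_Icc.prod measurableSet_Icc)
  have hdisj : Disjoint S (⋃ j ∈ J, Icc r₁ (j : ℝ) ×ˢ Icc r₂ ((n : ℝ) - (j : ℝ))) := by
    rw [Set.disjoint_left]
    rintro ⟨x, y⟩ hzS hzU
    simp only [Set.mem_iUnion, Set.mem_prod, Set.mem_Icc, exists_prop] at hzU
    obtain ⟨j, hj, ⟨hx1, hx2⟩, hy1, hy2⟩ := hzU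
    simp only [hS, Set.mem_prod, Set.mem_Ioc] at hzS
    obtain ⟨⟨hx1', hx2'⟩, hy1', hy2'⟩ := hzS
    rcases lt_trichotomy j k with hjk | hjk | hjk
    · have hjp : j ≤ p := hgl j hj hjk
      have : (j : ℝ) ≤ p := by exact_mod_cast hjp
      linarith
    · exact hk (hjk ▸ hj)
    · have hqj : q ≤ j := hgr j hj hjk
      have : (q : ℝ) ≤ j := by exact_mod_cast hqj
      linarith
  have hSvol : volume S = ENNReal.ofReal ((k : ℝ) - p) * ENNReal.ofReal ((q : ℝ) - k) := by
    rw [hS, Measure.volume_eq_prod, Measure.prod_prod, Real.volume_Ioc, Real.volume_Ioc]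
    congr 1
    congr 1
    ring
  have hfin : volume (⋃ j ∈ J, Icc r₁ (j : ℝ) ×ˢ Icc r₂ ((n : ℝ) - (j : ℝ))) ≠ ⊤ := by
    have hsub : (⋃ j ∈ J, Icc r₁ (j : ℝ) ×ˢ Icc r₂ ((n : ℝ) - (j : ℝ)))
        ⊆ Icc r₁ (n : ℝ) ×ˢ Icc r₂ (n : ℝ) := by
      apply Set.iUnion₂_subset
      intro j hj
      apply Set.prod_mono
      · exact Set.Icc_subset_Icc_right (by exact_mod_cast hJ j hj)
      · exact Set.Icc_subset_Icc_right (by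
          have : (0 : ℝ) ≤ j := Nat.cast_nonneg j
          linarith)
    refine ne_top_of_le_ne_top ?_ (measure_mono hsub)
    rw [Measure.volume_eq_prod, Measure.prod_prod, Real.volume_Icc, Real.volume_Icc]
    exact ENNReal.mul_ne_top ENNReal.ofReal_ne_top ENNReal.ofReal_ne_top
  have hSfin : volume S ≠ ⊤ := by
    rw [hSvol]; exact ENNReal.mul_ne_top ENNReal.ofReal_ne_top ENNReal.ofReal_ne_top
  unfold HV
  rw [hU, measure_union hdisj hmU, ENNReal.toReal_add hSfin hfin, hSvol,
    ENNReal.toReal_mul, ENNReal.toReal_ofReal (by linarith), ENNReal.toReal_ofReal (by linarith)]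
  ring

open Set in
/-- Equation (1): for `J ⊆ {0,…,n}` with `0, n ∈ J` listed as `j_1 < … < j_m`, the
hypervolume equals `A - Σ_{a=2}^m (j_a - j_{a-1})²/2`, where
`A = -r₁n - r₂n + r₁r₂ + n²/2` (the sum of squared consecutive gaps is expressed as
`Σ_{j ∈ J} gapAfter(J,j)²`, since `gapAfter` vanishes at the maximum `n` of `J`). -/
theorem stmt6 (n : ℕ) (hn : 1 ≤ n) (r₁ r₂ : ℝ) (hr₁ : r₁ ≤ 0) (hr₂ : r₂ ≤ 0)
    (J : Finset ℕ) (hJ : ∀ j ∈ J, j ≤ n) (h0 : 0 ∈ J) (hnJ : n ∈ J)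
    (A : ℝ) (hA : A = -r₁ * n - r₂ * n + r₁ * r₂ + (n : ℝ) ^ 2 / 2) :
    HV n J r₁ r₂ = A - ∑ j ∈ J, (gapAfter J j : ℝ) ^ 2 / 2 := by
  subst hA
  have hn0 : n ≠ 0 := Nat.one_le_iff_ne_zero.mp hn
  revert hJ h0 hnJ
  induction J using Finset.strongInduction with
  | _ J IH =>
  intro hJ h0 hnJ
  have hsub : ({0, n} : Finset ℕ) ⊆ J := by
    intro x hx
    simp only [Finset.mem_insert, Finset.mem_singleton] at hx
    rcases hx with rfl | rfl <;> assumption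
  have hc2 : ({0, n} : Finset ℕ).card = 2 := by
    rw [Finset.card_insert_of_notMem (by simp [Ne.symm hn0]), Finset.card_singleton]
  by_cases hc : J.card ≤ 2
  · -- base case : J = {0, n}
    have hJeq : J = ({0, n} : Finset ℕ) :=
      (Finset.eq_of_subset_of_card_le hsub (hc2 ▸ hc)).symm
    subst hJeq
    have hnR : (0 : ℝ) < n := by exact_mod_cast hn
    -- gap values
    have hg0 : gapAfter ({0, n} : Finset ℕ) 0 = n := by
      have := gapAfter_eq_of ({0, n} : Finset ℕ) 0 n (by simp) (Nat.pos_of_ne_zero hn0)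
        (by intro b hb hb0
            simp only [Finset.mem_insert, Finset.mem_singleton] at hb
            rcases hb with rfl | rfl
            · omega
            · exact le_rfl)
      simpa using this
    have hgn : gapAfter ({0, n} : Finset ℕ) n = 0 := by
      apply gapAfter_max
      intro b hb
      simp only [Finset.mem_insert, Finset.mem_singleton] at hb
      rcases hb with rfl | rfl
      · exact Nat.zero_le n
      · exact le_rfl
    have hsum : ∑ j ∈ ({0, n} : Finset ℕ), (gapAfter ({0, n} : Finset ℕ) j : ℝ) ^ 2 / 2
        = (n : ℝ) ^ 2 / 2 := by
      rw [Finset.sum_pair hn0.symm, hg0, hgn]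
      push_cast
      ring
    rw [hsum]
    -- volume computation
    have hU : (⋃ j ∈ ({0, n} : Finset ℕ), Icc r₁ (j : ℝ) ×ˢ Icc r₂ ((n : ℝ) - (j : ℝ)))
        = (Icc r₁ (0 : ℝ) ×ˢ Icc r₂ (n : ℝ)) ∪ (Ioc (0 : ℝ) (n : ℝ) ×ˢ Icc r₂ (0 : ℝ)) := by
      ext ⟨x, y⟩
      simp only [Set.mem_iUnion, Finset.mem_insert, Finset.mem_singleton, Set.mem_union,
        Set.mem_prod, Set.mem_Icc, Set.mem_Ioc, exists_prop]
      constructor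
      · rintro ⟨j, hj | hj, ⟨hx1, hx2⟩, hy1, hy2⟩
        · subst hj
          refine Or.inl ⟨⟨hx1, by exact_mod_cast hx2⟩, hy1, by
            push_cast at hy2; linarith⟩
        · subst hj
          by_cases hx0 : x ≤ 0
          · exact Or.inl ⟨⟨hx1, hx0⟩, hy1, by linarith⟩
          · exact Or.inr ⟨⟨lt_of_not_ge hx0, hx2⟩, hy1, by linarith⟩
      · rintro (⟨⟨hx1, hx2⟩, hy1, hy2⟩ | ⟨⟨hx1, hx2⟩, hy1, hy2⟩)
        · exact ⟨0, Or.inl rfl, ⟨hx1, by exact_mod_cast hx2⟩, hy1, by push_cast; linarith⟩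
        · exact ⟨n, Or.inr rfl, ⟨by linarith, hx2⟩, hy1, by linarith⟩
    have hdisj : Disjoint (Icc r₁ (0 : ℝ) ×ˢ Icc r₂ (n : ℝ))
        (Ioc (0 : ℝ) (n : ℝ) ×ˢ Icc r₂ (0 : ℝ)) := by
      rw [Set.disjoint_left]
      rintro ⟨x, y⟩ h1 h2
      simp only [Set.mem_prod, Set.mem_Icc, Set.mem_Ioc] at h1 h2
      linarith [h1.1.2, h2.1.1]
    have hm2 : MeasurableSet (Ioc (0 : ℝ) (n : ℝ) ×ˢ Icc r₂ (0 : ℝ)) :=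
      measurableSet_Ioc.prod measurableSet_Icc
    unfold HV
    rw [hU, measure_union hdisj hm2]
    rw [Measure.volume_eq_prod, Measure.prod_prod, Measure.prod_prod,
      Real.volume_Icc, Real.volume_Icc, Real.volume_Ioc, Real.volume_Icc]
    rw [ENNReal.toReal_add (by exact ENNReal.mul_ne_top ENNReal.ofReal_ne_top ENNReal.ofReal_ne_top)
      (by exact ENNReal.mul_ne_top ENNReal.ofReal_ne_top ENNReal.ofReal_ne_top),
      ENNReal.toReal_mul, ENNReal.toReal_mul,
      ENNReal.toReal_ofReal (by linarith), ENNReal.toReal_ofReal (by linarith),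
      ENNReal.toReal_ofReal (by linarith), ENNReal.toReal_ofReal (by linarith)]
    ring
  · -- inductive step
    push_neg at hc
    have hss : ({0, n} : Finset ℕ) ⊂ J := by
      refine ⟨hsub, fun h => ?_⟩
      have := Finset.card_le_card h
      omega
    obtain ⟨k, hkJ, hknot⟩ := Finset.exists_of_ssubset hss
    simp only [Finset.mem_insert, Finset.mem_singleton, not_or] at hknot
    obtain ⟨hk0, hkn⟩ := hknot
    have hkpos : 0 < k := Nat.pos_of_ne_zero hk0
    have hkltn : k < n := lt_of_le_of_ne (hJ k hkJ) hkn
    set J' := J.erase k with hJ'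
    have hkJ' : k ∉ J' := Finset.notMem_erase k J
    have h0' : (0 : ℕ) ∈ J' := Finset.mem_erase.mpr ⟨fun h => hk0 h.symm, h0⟩
    have hnJ' : n ∈ J' := Finset.mem_erase.mpr ⟨fun h => hkn h.symm, hnJ⟩
    have hJ'sub : ∀ j ∈ J', j ≤ n := fun j hj => hJ j (Finset.mem_of_mem_erase hj)
    have hne1 : (J'.filter (fun b => b < k)).Nonempty :=
      ⟨0, Finset.mem_filter.mpr ⟨h0', hkpos⟩⟩
    have hne2 : (J'.filter (fun b => k < b)).Nonempty :=
      ⟨n, Finset.mem_filter.mpr ⟨hnJ', hkltn⟩⟩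
    set p := (J'.filter (fun b => b < k)).max' hne1 with hpdef
    set q := (J'.filter (fun b => k < b)).min' hne2 with hqdef
    have hpmem : p ∈ J'.filter (fun b => b < k) := Finset.max'_mem _ _
    have hqmem : q ∈ J'.filter (fun b => k < b) := Finset.min'_mem _ _
    have hp : p ∈ J' := (Finset.mem_filter.mp hpmem).1
    have hq : q ∈ J' := (Finset.mem_filter.mp hqmem).1
    have hpk : p < k := (Finset.mem_filter.mp hpmem).2
    have hkq : k < q := (Finset.mem_filter.mp hqmem).2
    have hgl : ∀ j ∈ J', j < k → j ≤ p :=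
      fun j hj hjk => Finset.le_max' (J'.filter (fun b => b < k)) j (Finset.mem_filter.mpr ⟨hj, hjk⟩)
    have hgr : ∀ j ∈ J', k < j → q ≤ j :=
      fun j hj hjk => Finset.min'_le (J'.filter (fun b => k < b)) j (Finset.mem_filter.mpr ⟨hj, hjk⟩)
    have hJeq : J = insert k J' := (Finset.insert_erase hkJ).symm
    have hss' : J' ⊂ J := Finset.erase_ssubset hkJ
    have hIH := IH J' hss' hJ'sub h0' hnJ'
    -- gap values
    have gA1 : gapAfter J k = q - k := by
      apply gapAfter_eq_of J k q (Finset.mem_of_mem_erase hq) hkq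
      intro b hb hkb
      have hb' : b ∈ J' := Finset.mem_erase.mpr ⟨by omega, hb⟩
      exact hgr b hb' hkb
    have gA2 : gapAfter J p = k - p := by
      apply gapAfter_eq_of J p k hkJ hpk
      intro b hb hpb
      by_cases hbk : b = k
      · exact le_of_eq hbk.symm
      · have hb' : b ∈ J' := Finset.mem_erase.mpr ⟨hbk, hb⟩
        rcases lt_or_ge b k with h1 | h1
        · exact absurd (hgl b hb' h1) (Nat.not_le.mpr hpb)
        · exact h1
    have gA3 : gapAfter J' p = q - p := by
      apply gapAfter_eq_of J' p q hq (lt_trans hpk hkq)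
      intro b hb hpb
      rcases lt_or_ge b k with h1 | h1
      · exact absurd (hgl b hb h1) (Nat.not_le.mpr hpb)
      · rcases eq_or_lt_of_le h1 with h2 | h2
        · exact absurd h2.symm (Finset.mem_erase.mp hb).1
        · exact hgr b hb h2
    have gA4 : ∀ j ∈ J', j ≠ p → gapAfter J j = gapAfter J' j := by
      intro j hj hjp
      have hjk : j ≠ k := (Finset.mem_erase.mp hj).1
      unfold gapAfter
      rcases lt_or_gt_of_ne hjk with h1 | h1
      · -- j < k, so j < p
        have hjp' : j < p := lt_of_le_of_ne (hgl j hj h1) hjp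
        have hfilter : J.filter (fun b => j < b) = insert k (J'.filter (fun b => j < b)) := by
          rw [hJeq, Finset.filter_insert, if_pos h1]
        have hpf : p ∈ J'.filter (fun b => j < b) := Finset.mem_filter.mpr ⟨hp, hjp'⟩
        have hmin : (J'.filter (fun b => j < b)).min ≤ (p : WithTop ℕ) := Finset.min_le hpf
        have hle : (J'.filter (fun b => j < b)).min ≤ (k : WithTop ℕ) := by
          refine le_trans hmin ?_
          exact_mod_cast le_of_lt hpk
        have heq : (J.filter (fun b => j < b)).min = (J'.filter (fun b => j < b)).min := by
          rw [hfilter, Finset.min_insert]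
          exact min_eq_right hle
        rw [heq]
      · -- k < j
        have hfilter : J.filter (fun b => j < b) = J'.filter (fun b => j < b) := by
          rw [hJeq, Finset.filter_insert, if_neg (by omega)]
        rw [hfilter]
    -- sums
    have hsum : ∑ j ∈ J, (gapAfter J j : ℝ) ^ 2 / 2
        = ∑ j ∈ J', (gapAfter J' j : ℝ) ^ 2 / 2
          + ((q - k : ℕ) : ℝ) ^ 2 / 2 + ((k - p : ℕ) : ℝ) ^ 2 / 2 - ((q - p : ℕ) : ℝ) ^ 2 / 2 := by
      rw [hJeq, Finset.sum_insert hkJ', ← hJeq, gA1]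
      have h1 : ∑ j ∈ J', (gapAfter J j : ℝ) ^ 2 / 2
          = (gapAfter J p : ℝ) ^ 2 / 2 + ∑ j ∈ J'.erase p, (gapAfter J j : ℝ) ^ 2 / 2 :=
        (Finset.add_sum_erase J' _ hp).symm
      have h2 : ∑ j ∈ J', (gapAfter J' j : ℝ) ^ 2 / 2
          = (gapAfter J' p : ℝ) ^ 2 / 2 + ∑ j ∈ J'.erase p, (gapAfter J' j : ℝ) ^ 2 / 2 :=
        (Finset.add_sum_erase J' _ hp).symm
      have h3 : ∑ j ∈ J'.erase p, (gapAfter J j : ℝ) ^ 2 / 2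
          = ∑ j ∈ J'.erase p, (gapAfter J' j : ℝ) ^ 2 / 2 := by
        apply Finset.sum_congr rfl
        intro j hj
        rw [gA4 j (Finset.mem_of_mem_erase hj) (Finset.mem_erase.mp hj).1]
      rw [h1, h2, h3, gA2, gA3]
      ring
    -- volume
    have hvol : HV n J r₁ r₂ = HV n J' r₁ r₂ + ((k : ℝ) - p) * ((q : ℝ) - k) := by
      rw [hJeq]
      exact HV_insert n r₁ r₂ hr₁ hr₂ J' hJ'sub k p q (le_of_lt hkltn) hkJ' hp hq hpk hkq hgl hgr
    rw [hvol, hIH, hsum]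
    have c1 : ((q - k : ℕ) : ℝ) = (q : ℝ) - k := by
      rw [Nat.cast_sub (le_of_lt hkq)]
    have c2 : ((k - p : ℕ) : ℝ) = (k : ℝ) - p := by
      rw [Nat.cast_sub (le_of_lt hpk)]
    have c3 : ((q - p : ℕ) : ℝ) = (q : ℝ) - p := by
      rw [Nat.cast_sub (le_of_lt (lt_trans hpk hkq))]
    rw [c1, c2, c3]
    ring
end

section
/- Let n ≥ 1, let r₁, r₂ ≤ 0 be real numbers, set A := −r₁·n − r₂·n + r₁·r₂ + n²/2, and let J ⊆ {0,1,…,n} be a finite set with 0 ∈ J, n ∈ J, and |J| = m ≥ 2. Then the hypervolume satisfies HV(J, r) ≤ A − n/(2(m−1)). (Upper bound of Lemma 4.) -/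
open MeasureTheory

/-- Upper bound of Lemma 4: for `J ⊆ {0,…,n}` with `0, n ∈ J` and `|J| = m ≥ 2`,
the hypervolume satisfies `HV(J,r) ≤ A - n/(2(m-1))`, where
`A = -r₁n - r₂n + r₁r₂ + n²/2`. -/
theorem stmt7 (n : ℕ) (hn : 1 ≤ n) (r₁ r₂ : ℝ) (hr₁ : r₁ ≤ 0) (hr₂ : r₂ ≤ 0)
    (A : ℝ) (hA : A = -r₁ * n - r₂ * n + r₁ * r₂ + (n : ℝ) ^ 2 / 2)
    (J : Finset ℕ) (hJ : ∀ j ∈ J, j ≤ n) (h0 : 0 ∈ J) (hnJ : n ∈ J)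
    (m : ℕ) (hm : J.card = m) (hm2 : 2 ≤ m) :
    HV n J r₁ r₂ ≤ A - (n : ℝ) / (2 * ((m : ℝ) - 1)) := by
  classical
  have hm0 : 0 < m := by omega
  set e := J.orderEmbOfFin hm with he
  set N : ℕ → ℕ := fun k => if h : k < m then e ⟨k, h⟩ else n with hN
  have hNmem : ∀ k, N k ∈ J := by
    intro k
    by_cases h : k < m
    · simp only [hN, dif_pos h]; exact J.orderEmbOfFin_mem hm ⟨k, h⟩
    · simp only [hN, dif_neg h]; exact hnJ
  have hNle : ∀ k, N k ≤ n := fun k => hJ _ (hNmem k)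
  have hN0 : N 0 = 0 := by
    have h1 : e ⟨0, hm0⟩ = J.min' ⟨0, h0⟩ := Finset.orderEmbOfFin_zero hm hm0
    have h2 : J.min' ⟨0, h0⟩ = 0 :=
      Nat.le_antisymm (Finset.min'_le _ _ h0) (Nat.zero_le _)
    simp only [hN, dif_pos hm0]
    rw [h1, h2]
  have hNlast : N (m - 1) = n := by
    have hlt : m - 1 < m := by omega
    have h1 : e ⟨m - 1, hlt⟩ = J.max' ⟨0, h0⟩ := by
      have := Finset.orderEmbOfFin_last hm hm0
      convert this using 2
    have h2 : J.max' ⟨0, h0⟩ = n :=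
      Nat.le_antisymm (Finset.max'_le _ _ _ hJ) (Finset.le_max' _ _ hnJ)
    simp only [hN, dif_pos hlt]
    rw [h1, h2]
  have hNmono : Monotone N := by
    intro k l hkl
    by_cases hl : l < m
    · have hk : k < m := lt_of_le_of_lt hkl hl
      simp only [hN, dif_pos hl, dif_pos hk]
      exact (J.orderEmbOfFin hm).monotone (by exact hkl)
    · simp only [hN, dif_neg hl]
      by_cases hk : k < m
      · simp only [dif_pos hk]; exact hJ _ (J.orderEmbOfFin_mem hm ⟨k, hk⟩)
      · simp only [dif_neg hk]; exact le_refl n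
  have hNsurj : ∀ j ∈ J, ∃ k < m, N k = j := by
    intro j hj
    have : j ∈ Set.range e := by rw [Finset.range_orderEmbOfFin]; exact hj
    obtain ⟨⟨k, hk⟩, hke⟩ := this
    exact ⟨k, hk, by simp only [hN, dif_pos hk]; exact hke⟩
  -- cover sets
  set L : ℕ → ℝ := fun k => if k = 0 then r₁ else (N (k - 1) : ℝ) with hL
  set C : ℕ → Set (ℝ × ℝ) :=
    fun k => Set.Icc (L k) (N k : ℝ) ×ˢ Set.Icc r₂ ((n : ℝ) - (N k : ℝ)) with hC
  have hcover : (⋃ j ∈ J, Set.Icc r₁ (j : ℝ) ×ˢ Set.Icc r₂ ((n : ℝ) - (j : ℝ)))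
      ⊆ ⋃ k ∈ Finset.range m, C k := by
    intro p hp
    simp only [Set.mem_iUnion, Set.mem_prod, Set.mem_Icc] at hp
    obtain ⟨j, hj, ⟨hx1, hx2⟩, hy1, hy2⟩ := hp
    obtain ⟨k₀, hk₀m, hk₀⟩ := hNsurj j hj
    have hP : p.1 ≤ (N k₀ : ℝ) := by rw [hk₀]; exact hx2
    have hex : ∃ k, p.1 ≤ (N k : ℝ) := ⟨k₀, hP⟩
    set k := Nat.find hex with hk
    have hspec : p.1 ≤ (N k : ℝ) := Nat.find_spec hex
    have hklek₀ : k ≤ k₀ := Nat.find_min' _ hP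
    have hkm : k < m := lt_of_le_of_lt hklek₀ hk₀m
    simp only [Set.mem_iUnion, Finset.mem_range]
    refine ⟨k, hkm, ?_, ?_⟩
    · constructor
      · by_cases hk0 : k = 0
        · simp only [hL, hk0, if_pos rfl]; exact hx1
        · simp only [hL, if_neg hk0]
          have := Nat.find_min hex (Nat.sub_lt (Nat.pos_of_ne_zero hk0) one_pos)
          rw [← hk] at this
          exact le_of_not_ge this
      · exact hspec
    · refine ⟨hy1, ?_⟩
      have hNkj : (N k : ℝ) ≤ (j : ℝ) := by
        rw [← hk₀]; exact_mod_cast hNmono hklek₀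
      linarith
  have hLN : ∀ k, L k ≤ (N k : ℝ) := by
    intro k
    by_cases hk0 : k = 0
    · subst hk0; simp only [hL, if_pos rfl, hN0]; exact_mod_cast hr₁
    · simp only [hL, if_neg hk0]
      exact_mod_cast hNmono (Nat.sub_le k 1)
  have hNr : ∀ k, (0:ℝ) ≤ (n:ℝ) - N k - r₂ := by
    intro k
    have : (N k : ℝ) ≤ n := by exact_mod_cast hNle k
    linarith
  have hvol : ∀ k, volume (C k)
      = ENNReal.ofReal (((N k : ℝ) - L k) * ((n:ℝ) - N k - r₂)) := by
    intro k
    simp only [hC]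
    rw [show (volume : Measure (ℝ × ℝ)) = Measure.prod volume volume from
        Measure.volume_eq_prod ℝ ℝ, Measure.prod_prod, Real.volume_Icc, Real.volume_Icc,
      ← ENNReal.ofReal_mul (by linarith [hLN k])]
  have hmeas : volume (⋃ j ∈ J, Set.Icc r₁ (j : ℝ) ×ˢ Set.Icc r₂ ((n : ℝ) - (j : ℝ)))
      ≤ ∑ k ∈ Finset.range m, ENNReal.ofReal (((N k : ℝ) - L k) * ((n:ℝ) - N k - r₂)) := by
    refine le_trans (measure_mono hcover) ?_
    refine le_trans (measure_biUnion_finset_le _ _) ?_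
    exact Finset.sum_le_sum fun k _ => le_of_eq (hvol k)
  have hterm : ∀ k, 0 ≤ ((N k : ℝ) - L k) * ((n:ℝ) - N k - r₂) := by
    intro k
    exact mul_nonneg (by linarith [hLN k]) (hNr k)
  have hHV : (volume (⋃ j ∈ J, Set.Icc r₁ (j : ℝ) ×ˢ Set.Icc r₂ ((n : ℝ) - (j : ℝ)))).toReal
      ≤ ∑ k ∈ Finset.range m, ((N k : ℝ) - L k) * ((n:ℝ) - N k - r₂) := by
    rw [← ENNReal.ofReal_sum_of_nonneg (fun k _ => hterm k)] at hmeas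
    calc _ ≤ (ENNReal.ofReal (∑ k ∈ Finset.range m,
          ((N k : ℝ) - L k) * ((n:ℝ) - N k - r₂))).toReal :=
            ENNReal.toReal_mono ENNReal.ofReal_ne_top hmeas
      _ = _ := ENNReal.toReal_ofReal (Finset.sum_nonneg fun k _ => hterm k)
  -- arithmetic
  set d : ℕ → ℝ := fun i => ((N (i+1) : ℝ) - N i) with hd
  have hd0 : ∀ i, 0 ≤ d i := by
    intro i
    simp only [hd, sub_nonneg]
    exact_mod_cast hNmono (Nat.le_succ i)
  have hsumd : ∑ i ∈ Finset.range (m-1), d i = (n:ℝ) := by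
    have := Finset.sum_range_sub (fun k => ((N k : ℝ))) (m-1)
    simp only [hd]
    rw [this, hNlast, hN0]
    norm_num
  have hsq : ∑ i ∈ Finset.range (m-1), (((N (i+1):ℝ))^2 - ((N i:ℝ))^2) = (n:ℝ)^2 := by
    have := Finset.sum_range_sub (fun k => ((N k : ℝ))^2) (m-1)
    rw [this, hNlast, hN0]
    norm_num
  have hsplit : ∑ k ∈ Finset.range m, ((N k : ℝ) - L k) * ((n:ℝ) - N k - r₂)
      = (0 - r₁) * ((n:ℝ) - r₂)
        + ∑ i ∈ Finset.range (m-1), d i * ((n:ℝ) - N (i+1) - r₂) := by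
    have hm' : m = (m-1) + 1 := by omega
    rw [hm', Finset.sum_range_succ', add_comm]
    congr 1
    · simp only [hL, if_pos rfl, hN0]
      norm_num
  have key : 2 * (∑ i ∈ Finset.range (m-1), d i * ((n:ℝ) - N (i+1) - r₂))
      = 2 * (n:ℝ) * ((n:ℝ) - r₂) - (n:ℝ)^2 - ∑ i ∈ Finset.range (m-1), d i ^ 2 := by
    have hpt : ∀ i, 2 * (d i * ((n:ℝ) - N (i+1) - r₂))
        = 2 * (d i * ((n:ℝ) - r₂)) - (((N (i+1):ℝ))^2 - ((N i:ℝ))^2) - d i ^ 2 := by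
      intro i; simp only [hd]; ring
    rw [Finset.mul_sum, Finset.sum_congr rfl (fun i _ => hpt i),
      Finset.sum_sub_distrib, Finset.sum_sub_distrib, hsq, ← Finset.mul_sum,
      ← Finset.sum_mul, hsumd]
    ring
  have hm1 : (0:ℝ) < (m:ℝ) - 1 := by
    have : (2:ℝ) ≤ m := by exact_mod_cast hm2
    linarith
  have hn' : (1:ℝ) ≤ n := by exact_mod_cast hn
  have hcs : (n:ℝ)^2 ≤ ((m:ℝ) - 1) * ∑ i ∈ Finset.range (m-1), d i ^ 2 := by
    have h := sq_sum_le_card_mul_sum_sq (s := Finset.range (m-1)) (f := d)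
    rw [hsumd, Finset.card_range] at h
    have hcast : ((m - 1 : ℕ) : ℝ) = (m:ℝ) - 1 := by
      have : 1 ≤ m := by omega
      push_cast [this]
      ring
    rw [hcast] at h
    exact h
  have hD : (n:ℝ)/((m:ℝ)-1) ≤ ∑ i ∈ Finset.range (m-1), d i ^ 2 := by
    rw [div_le_iff₀ hm1]
    nlinarith [hcs, hn']
  have hq : (n:ℝ)/(2*((m:ℝ)-1)) = ((n:ℝ)/((m:ℝ)-1))/2 := by
    rw [div_div, mul_comm]
  show (volume (⋃ j ∈ J, Set.Icc r₁ (j : ℝ) ×ˢ Set.Icc r₂ ((n : ℝ) - (j : ℝ)))).toReal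
      ≤ A - (n : ℝ) / (2 * ((m : ℝ) - 1))
  rw [hsplit] at hHV
  rw [hA, hq]
  linarith [key, hD, hHV]
end

section
/- Let n ≥ 1, let r₁, r₂ ≤ 0 be real numbers, set A := −r₁·n − r₂·n + r₁·r₂ + n²/2, and let J ⊆ {0,1,…,n} be a finite set with 0 ∈ J, n ∈ J, and |J| = m ≥ 2. Then the hypervolume satisfies HV(J, r) ≥ A − (m−1)·mei(J)²/2. (Lower bound of Lemma 4.) -/
open MeasureTheory

/-- Lower bound of Lemma 4: for `J ⊆ {0,…,n}` with `0, n ∈ J` and `|J| = m ≥ 2`,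
the hypervolume satisfies `HV(J,r) ≥ A - (m-1)·mei(J)²/2`, where
`A = -r₁n - r₂n + r₁r₂ + n²/2`. -/
theorem stmt8 (n : ℕ) (hn : 1 ≤ n) (r₁ r₂ : ℝ) (hr₁ : r₁ ≤ 0) (hr₂ : r₂ ≤ 0)
    (A : ℝ) (hA : A = -r₁ * n - r₂ * n + r₁ * r₂ + (n : ℝ) ^ 2 / 2)
    (J : Finset ℕ) (hJ : ∀ j ∈ J, j ≤ n) (h0 : 0 ∈ J) (hnJ : n ∈ J)
    (m : ℕ) (hm : J.card = m) (hm2 : 2 ≤ m) :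
    HV n J r₁ r₂ ≥ A - ((m : ℝ) - 1) * (mei J : ℝ) ^ 2 / 2 := by
  classical
  have hmpos : 0 < m := by omega
  set e := J.orderEmbOfFin hm with he
  set f : ℕ → ℕ := fun i => if h : i < m then e ⟨i, h⟩ else n with hf
  have hfmem : ∀ i, i < m → f i ∈ J := by
    intro i hi
    simp only [hf, dif_pos hi]
    exact Finset.orderEmbOfFin_mem J hm ⟨i, hi⟩
  have hfmono : ∀ i k, i ≤ k → k < m → f i ≤ f k := by
    intro i k hik hk
    simp only [hf, dif_pos hk, dif_pos (lt_of_le_of_lt hik hk)]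
    exact e.monotone (show (⟨i, _⟩ : Fin m) ≤ ⟨k, hk⟩ from hik)
  have hfstrict : ∀ i k, i < k → k < m → f i < f k := by
    intro i k hik hk
    simp only [hf, dif_pos hk, dif_pos (lt_trans hik hk)]
    exact e.strictMono (show (⟨i, _⟩ : Fin m) < ⟨k, hk⟩ from hik)
  have hf0 : f 0 = 0 := by
    simp only [hf, dif_pos hmpos]
    rw [Finset.orderEmbOfFin_zero hm hmpos]
    exact le_antisymm (Finset.min'_le J 0 h0) (Nat.zero_le _)
  have hflast : f (m - 1) = n := by
    simp only [hf, dif_pos (show m - 1 < m by omega)]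
    rw [Finset.orderEmbOfFin_last hm hmpos]
    exact le_antisymm (hJ _ (J.max'_mem _)) (Finset.le_max' J n hnJ)
  -- each consecutive gap is at most mei J
  have hgap : ∀ i, i + 1 < m → f (i + 1) - f i ≤ mei J := by
    intro i hi
    have him : i < m := by omega
    have hmemf : f (i + 1) ∈ J.filter (fun b => f i < b) := by
      rw [Finset.mem_filter]
      exact ⟨hfmem _ hi, hfstrict i (i + 1) (by omega) hi⟩
    have hne : (J.filter (fun b => f i < b)).Nonempty := ⟨_, hmemf⟩
    set b := (J.filter (fun b => f i < b)).min' hne with hb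
    have hbmem := Finset.min'_mem _ hne
    rw [← hb] at hbmem
    have hbJ : b ∈ J := (Finset.mem_filter.1 hbmem).1
    have hbgt : f i < b := (Finset.mem_filter.1 hbmem).2
    -- b ≥ f (i+1)
    have hbge : f (i + 1) ≤ b := by
      obtain ⟨k, hk⟩ : ∃ k : Fin m, e k = b := by
        have : (b : ℕ) ∈ Set.range e := by
          rw [he, Finset.range_orderEmbOfFin]; exact_mod_cast hbJ
        obtain ⟨k, hk⟩ := this; exact ⟨k, hk⟩
      have hik : i < (k : ℕ) := by
        by_contra hcon
        push_neg at hcon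
        have : f k ≤ f i := hfmono _ _ hcon him
        have hfk : f k = b := by simp only [hf, dif_pos k.2]; simpa using hk
        omega
      have := hfmono (i + 1) k (by omega) k.2
      have hfk : f k = b := by simp only [hf, dif_pos k.2]; simpa using hk
      omega
    have hgA : gapAfter J (f i) = b - f i := by
      unfold gapAfter
      rw [← Finset.coe_min' hne, ← hb]
      rfl
    calc f (i + 1) - f i ≤ b - f i := by omega
      _ = gapAfter J (f i) := hgA.symm
      _ ≤ mei J := Finset.le_sup (hfmem i him)
  -- real versions
  set g : ℕ → ℝ := fun i => (f i : ℝ) with hg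
  have hg0 : g 0 = 0 := by simp [hg, hf0]
  have hglast : g (m - 1) = n := by simp [hg, hflast]
  have hgmono : ∀ i k, i ≤ k → k < m → g i ≤ g k := by
    intro i k h1 h2; simp only [hg]; exact_mod_cast hfmono i k h1 h2
  have hgnonneg : ∀ i, 0 ≤ g i := fun i => by positivity
  set d : ℕ → ℝ := fun i => g (i + 1) - g i with hd
  have hdnonneg : ∀ i, i + 1 < m → 0 ≤ d i := by
    intro i hi; have := hgmono i (i + 1) (by omega) hi; simp [hd]; linarith
  have hdle : ∀ i, i + 1 < m → d i ≤ (mei J : ℝ) := by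
    intro i hi
    have h1 := hgap i hi
    have h2 := hfmono i (i + 1) (by omega) hi
    have : (f (i + 1) : ℝ) - f i ≤ (mei J : ℝ) := by
      have : ((f (i + 1) - f i : ℕ) : ℝ) ≤ (mei J : ℝ) := by exact_mod_cast h1
      rwa [Nat.cast_sub h2] at this
    simpa [hd, hg] using this
  -- the slabs
  set L : ℕ → ℝ := fun i => if i = 0 then r₁ else g (i - 1) with hL
  set T : ℕ → Set (ℝ × ℝ) :=
    fun i => Set.Ioc (L i) (g i) ×ˢ Set.Icc r₂ ((n : ℝ) - g i) with hT
  set U : Set (ℝ × ℝ) :=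
    ⋃ j ∈ J, Set.Icc r₁ (j : ℝ) ×ˢ Set.Icc r₂ ((n : ℝ) - (j : ℝ)) with hU
  have hLle : ∀ i, i < m → L i ≤ g i ∧ r₁ ≤ L i := by
    intro i hi
    rcases Nat.eq_zero_or_pos i with h | h
    · subst h; simp [hL, hg0, hr₁]
    · have hi0 : i ≠ 0 := by omega
      simp only [hL, if_neg hi0]
      exact ⟨hgmono (i - 1) i (by omega) hi, le_trans hr₁ (hgnonneg _)⟩
  have hTsub : ∀ i ∈ Finset.range m, T i ⊆ U := by
    intro i hi
    rw [Finset.mem_range] at hi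
    intro x hx
    rw [hT] at hx
    obtain ⟨hx1, hx2⟩ := hx
    rw [hU]
    refine Set.mem_biUnion (hfmem i hi) ?_
    constructor
    · exact ⟨le_trans (hLle i hi).2 (le_of_lt hx1.1), hx1.2⟩
    · exact hx2
  have hTdisj' : ∀ i k, i < k → k < m → Disjoint (T i) (T k) := by
    intro i k hlt hk
    rw [Set.disjoint_left]
    intro x hxi hxk
    rw [hT] at hxi hxk
    have h1 : x.1 ≤ g i := hxi.1.2
    have h2 : L k < x.1 := hxk.1.1
    have hk0 : k ≠ 0 := by omega
    rw [hL] at h2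
    simp only [if_neg hk0] at h2
    have : g i ≤ g (k - 1) := hgmono i (k - 1) (by omega) (by omega)
    linarith
  have hTdisj : (↑(Finset.range m) : Set ℕ).PairwiseDisjoint T := by
    intro i hi k hk hik
    simp only [Finset.coe_range, Set.mem_Iio] at hi hk
    rcases lt_or_gt_of_ne hik with h | h
    · exact hTdisj' i k h hk
    · exact (hTdisj' k i h hi).symm
  have hTmeas : ∀ i ∈ Finset.range m, MeasurableSet (T i) := by
    intro i _
    exact (measurableSet_Ioc.prod measurableSet_Icc)
  -- volume of each slab
  set v : ℕ → ℝ := fun i => (g i - L i) * ((n : ℝ) - g i - r₂) with hv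
  have hvnonneg : ∀ i ∈ Finset.range m, 0 ≤ v i := by
    intro i hi
    rw [Finset.mem_range] at hi
    have h1 := (hLle i hi).1
    have h2 : g i ≤ (n : ℝ) := by
      have := hJ (f i) (hfmem i hi)
      simp only [hg]; exact_mod_cast this
    have : 0 ≤ (n : ℝ) - g i - r₂ := by linarith
    exact mul_nonneg (by linarith) this
  have hvolT : ∀ i ∈ Finset.range m, volume (T i) = ENNReal.ofReal (v i) := by
    intro i hi
    have h0v := hvnonneg i hi
    rw [Finset.mem_range] at hi
    rw [hT]
    rw [Measure.volume_eq_prod, Measure.prod_prod, Real.volume_Ioc, Real.volume_Icc, hv,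
      ← ENNReal.ofReal_mul (by have := (hLle i hi).1; linarith)]
  -- measure lower bound
  have hUfin : volume U ≠ ⊤ := by
    have hsub : U ⊆ Set.Icc r₁ (n : ℝ) ×ˢ Set.Icc r₂ (n : ℝ) := by
      rw [hU]
      intro x hx
      simp only [Set.mem_iUnion] at hx
      obtain ⟨j, hjJ, hx⟩ := hx
      obtain ⟨hx1, hx2⟩ := hx
      have hjn : (j : ℝ) ≤ n := by exact_mod_cast hJ j hjJ
      exact ⟨⟨hx1.1, le_trans hx1.2 hjn⟩, ⟨hx2.1, le_trans hx2.2 (by have : (0:ℝ) ≤ (j:ℝ) := Nat.cast_nonneg j; linarith)⟩⟩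
    have : volume (Set.Icc r₁ (n : ℝ) ×ˢ Set.Icc r₂ (n : ℝ)) < ⊤ := by
      rw [Measure.volume_eq_prod, Measure.prod_prod, Real.volume_Icc, Real.volume_Icc]
      exact ENNReal.mul_lt_top ENNReal.ofReal_lt_top ENNReal.ofReal_lt_top
    exact ne_of_lt (lt_of_le_of_lt (measure_mono hsub) this)
  have hkey : ∑ i ∈ Finset.range m, v i ≤ HV n J r₁ r₂ := by
    have h1 : ENNReal.ofReal (∑ i ∈ Finset.range m, v i) ≤ volume U := by
      rw [ENNReal.ofReal_sum_of_nonneg hvnonneg]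
      calc ∑ i ∈ Finset.range m, ENNReal.ofReal (v i)
          = ∑ i ∈ Finset.range m, volume (T i) := by
            exact Finset.sum_congr rfl fun i hi => (hvolT i hi).symm
        _ = volume (⋃ i ∈ Finset.range m, T i) :=
            (measure_biUnion_finset hTdisj hTmeas).symm
        _ ≤ volume U := measure_mono (Set.iUnion₂_subset hTsub)
    have h2 := ENNReal.toReal_mono hUfin h1
    rwa [ENNReal.toReal_ofReal (Finset.sum_nonneg hvnonneg)] at h2
  -- arithmetic
  have hsum1 : ∑ i ∈ Finset.range (m - 1), d i = (n : ℝ) := by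
    have := Finset.sum_range_sub g (m - 1)
    rw [hg0, hglast] at this
    simpa [hd] using this
  have hsum2 : ∑ i ∈ Finset.range (m - 1), (2 * d i * ((n : ℝ) - g (i + 1)) + d i ^ 2)
      = (n : ℝ) ^ 2 := by
    have h1 : ∀ i, 2 * d i * ((n : ℝ) - g (i + 1)) + d i ^ 2
        = ((n : ℝ) - g i) ^ 2 - ((n : ℝ) - g (i + 1)) ^ 2 := by
      intro i; simp only [hd]; ring
    rw [Finset.sum_congr rfl fun i _ => h1 i,
      Finset.sum_range_sub' (fun i => ((n : ℝ) - g i) ^ 2) (m - 1), hg0, hglast]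
    ring
  have hsum3 : ∑ i ∈ Finset.range (m - 1), d i ^ 2 ≤ ((m : ℝ) - 1) * (mei J : ℝ) ^ 2 := by
    calc ∑ i ∈ Finset.range (m - 1), d i ^ 2
        ≤ ∑ i ∈ Finset.range (m - 1), (mei J : ℝ) ^ 2 := by
          refine Finset.sum_le_sum fun i hi => ?_
          rw [Finset.mem_range] at hi
          have hi' : i + 1 < m := by omega
          exact pow_le_pow_left₀ (hdnonneg i hi') (hdle i hi') 2
      _ = ((m : ℝ) - 1) * (mei J : ℝ) ^ 2 := by
          rw [Finset.sum_const, Finset.card_range, nsmul_eq_mul]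
          congr 1
          have : ((m - 1 : ℕ) : ℝ) = (m : ℝ) - 1 := by
            rw [Nat.cast_sub (by omega)]; simp
          rw [this]
  -- decompose sum of v
  have hvsum : ∑ i ∈ Finset.range m, v i
      = v 0 + ∑ i ∈ Finset.range (m - 1), d i * ((n : ℝ) - g (i + 1) - r₂) := by
    have hm' : (m - 1) + 1 = m := by omega
    have hss := Finset.sum_range_succ' v (m - 1)
    rw [hm'] at hss
    rw [hss, add_comm]
    congr 1
  have hv0 : v 0 = (-r₁) * ((n : ℝ) - r₂) := by
    simp only [hv, hL, hg0]
    norm_num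
  -- finish
  have hfinal : A - ((m : ℝ) - 1) * (mei J : ℝ) ^ 2 / 2 ≤ ∑ i ∈ Finset.range m, v i := by
    rw [hvsum, hv0, hA]
    have hexp : ∑ i ∈ Finset.range (m - 1), d i * ((n : ℝ) - g (i + 1) - r₂)
        = (∑ i ∈ Finset.range (m - 1), (2 * d i * ((n : ℝ) - g (i + 1)) + d i ^ 2)) / 2
          - (∑ i ∈ Finset.range (m - 1), d i ^ 2) / 2
          - r₂ * ∑ i ∈ Finset.range (m - 1), d i := by
      rw [Finset.sum_congr rfl (fun i (_ : i ∈ Finset.range (m-1)) =>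
          show d i * ((n : ℝ) - g (i + 1) - r₂)
            = (2 * d i * ((n : ℝ) - g (i + 1)) + d i ^ 2) / 2 - d i ^ 2 / 2 - r₂ * d i by ring),
        Finset.sum_sub_distrib, Finset.sum_sub_distrib, ← Finset.sum_div, ← Finset.sum_div,
        ← Finset.mul_sum]
    rw [hexp, hsum1, hsum2]
    have := hsum3
    nlinarith [hsum3]
  exact le_trans hfinal hkey
end

section
/- Let n ≥ 1 and N ≥ 2 be natural numbers, let r₁, r₂ ≤ 0 be real numbers, and set A := −r₁·n − r₂·n + r₁·r₂ + n²/2. Then: (i) for every finite set J ⊆ {0,1,…,n} with 0 ∈ J, n ∈ J and |J| ≤ N, one has HV(J, r) ≤ A − n/(2(N−1)); and (ii) there exists a finite set J ⊆ {0,1,…,n} with 0 ∈ J, n ∈ J and |J| ≤ N such that HV(J, r) ≥ A − (N−1)·⌈n/(N−1)⌉²/2. (Lemma 5: HV_opt(N, r) ∈ [A − (N−1)(mei_opt(N))²/2, A − n/(2(N−1))].) -/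
open MeasureTheory Set

/-- Real-valued predecessor of `j` inside `J`, defaulting to `r₁`. -/
noncomputable def pp (r₁ : ℝ) (J : Finset ℕ) (j : ℕ) : ℝ :=
  if h : (J.filter (· < j)).Nonempty then (((J.filter (· < j)).max' h : ℕ) : ℝ) else r₁

lemma pp_zero (r₁ : ℝ) (J : Finset ℕ) : pp r₁ J 0 = r₁ := by
  rw [pp, dif_neg]
  simp [Finset.filter_eq_empty_iff]

lemma pp_eq_max' (r₁ : ℝ) (J : Finset ℕ) (j : ℕ) (h : (J.filter (· < j)).Nonempty) :
    pp r₁ J j = (((J.filter (· < j)).max' h : ℕ) : ℝ) := dif_pos h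

lemma pp_ge_r₁ (r₁ : ℝ) (hr₁ : r₁ ≤ 0) (J : Finset ℕ) (j : ℕ) : r₁ ≤ pp r₁ J j := by
  rw [pp]; split
  · exact hr₁.trans (Nat.cast_nonneg _)
  · exact le_refl r₁

lemma pp_le (r₁ : ℝ) (hr₁ : r₁ ≤ 0) (J : Finset ℕ) (j : ℕ) : pp r₁ J j ≤ (j : ℝ) := by
  rw [pp]; split
  case isTrue h =>
    have := (J.filter (· < j)).max'_mem h
    have := (Finset.mem_filter.1 this).2
    exact_mod_cast (Nat.cast_le.2 (Nat.le_of_lt_succ (Nat.lt_succ_of_lt this)))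
  case isFalse h => exact hr₁.trans (Nat.cast_nonneg _)

lemma le_pp (r₁ : ℝ) (J : Finset ℕ) {k j : ℕ} (hk : k ∈ J) (hkj : k < j) :
    (k : ℝ) ≤ pp r₁ J j := by
  have hmem : k ∈ J.filter (· < j) := Finset.mem_filter.2 ⟨hk, hkj⟩
  rw [pp_eq_max' r₁ J j ⟨k, hmem⟩]
  exact_mod_cast Finset.le_max' _ k hmem

lemma HV_eq (n : ℕ) (J : Finset ℕ) (r₁ r₂ : ℝ) (hr₁ : r₁ ≤ 0) (hr₂ : r₂ ≤ 0)
    (hle : ∀ j ∈ J, j ≤ n) :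
    HV n J r₁ r₂ = ∑ j ∈ J, ((j : ℝ) - pp r₁ J j) * ((n : ℝ) - (j : ℝ) - r₂) := by
  classical
  set S : ℕ → Set (ℝ × ℝ) := fun j => Ioc (pp r₁ J j) (j : ℝ) ×ˢ Icc r₂ ((n : ℝ) - j) with hS
  have hSsub : ∀ j ∈ J, S j ⊆ Icc r₁ (j : ℝ) ×ˢ Icc r₂ ((n : ℝ) - j) := by
    intro j _
    exact Set.prod_mono (fun x hx => ⟨(pp_ge_r₁ r₁ hr₁ J j).trans hx.1.le, hx.2⟩) le_rfl
  have hcov : (⋃ j ∈ J, Icc r₁ (j : ℝ) ×ˢ Icc r₂ ((n : ℝ) - j)) ⊆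
      (⋃ j ∈ J, S j) ∪ ({r₁} : Set ℝ) ×ˢ (univ : Set ℝ) := by
    rintro ⟨x, y⟩ hxy
    simp only [Set.mem_iUnion, Set.mem_prod, Set.mem_Icc] at hxy
    obtain ⟨j, hj, ⟨hx1, hx2⟩, hy1, hy2⟩ := hxy
    rcases eq_or_lt_of_le hx1 with heq | hlt
    · right; exact ⟨heq.symm, trivial⟩
    · left
      set T := J.filter (fun k => ⌈x⌉₊ ≤ k) with hT
      have hjT : j ∈ T := Finset.mem_filter.2 ⟨hj, Nat.ceil_le.2 hx2⟩
      have hTne : T.Nonempty := ⟨j, hjT⟩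
      set m := T.min' hTne with hm
      have hmT : m ∈ T := T.min'_mem hTne
      have hmJ : m ∈ J := (Finset.mem_filter.1 hmT).1
      have hxm : x ≤ (m : ℝ) := Nat.ceil_le.1 (Finset.mem_filter.1 hmT).2
      have hmj : m ≤ j := T.min'_le j hjT
      have hppm : pp r₁ J m < x := by
        rw [pp]; split
        case isTrue h =>
          set k₀ := (J.filter (· < m)).max' h with hk₀
          have hk₀mem := (J.filter (· < m)).max'_mem h
          have hk₀J : k₀ ∈ J := (Finset.mem_filter.1 hk₀mem).1
          have hk₀m : k₀ < m := (Finset.mem_filter.1 hk₀mem).2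
          by_contra hcon
          push_neg at hcon
          have : k₀ ∈ T := Finset.mem_filter.2 ⟨hk₀J, Nat.ceil_le.2 hcon⟩
          exact absurd (T.min'_le k₀ this) (not_le.2 hk₀m)
        case isFalse h => exact hlt
      refine Set.mem_iUnion₂.2 ⟨m, hmJ, ⟨⟨hppm, hxm⟩, hy1, ?_⟩⟩
      calc y ≤ (n : ℝ) - j := hy2
        _ ≤ (n : ℝ) - m := by have : (m:ℝ) ≤ j := Nat.cast_le.2 hmj; linarith
  have hmeas : ∀ j ∈ J, MeasurableSet (S j) := fun j _ =>
    measurableSet_Ioc.prod measurableSet_Icc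
  have hdisj : (↑J : Set ℕ).PairwiseDisjoint S := by
    have haux : ∀ i ∈ J, ∀ k ∈ J, i < k → Disjoint (S i) (S k) := by
      intro i hi k hk hik
      rw [Set.disjoint_left]
      rintro ⟨x, y⟩ hxi hxk
      have h1 : x ≤ (i : ℝ) := hxi.1.2
      have h2 : pp r₁ J k < x := hxk.1.1
      have h3 : (i : ℝ) ≤ pp r₁ J k := le_pp r₁ J hi hik
      linarith
    intro i hi k hk hik
    rcases lt_or_gt_of_ne hik with h | h
    · exact haux i hi k hk h
    · exact (haux k hk i hi h).symm
  have hvol : volume (⋃ j ∈ J, Icc r₁ (j : ℝ) ×ˢ Icc r₂ ((n : ℝ) - j)) =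
      ∑ j ∈ J, volume (S j) := by
    have h1 : volume (⋃ j ∈ J, S j) = ∑ j ∈ J, volume (S j) :=
      measure_biUnion_finset hdisj hmeas
    refine le_antisymm ?_ ?_
    · calc volume (⋃ j ∈ J, Icc r₁ (j : ℝ) ×ˢ Icc r₂ ((n : ℝ) - j))
          ≤ volume ((⋃ j ∈ J, S j) ∪ ({r₁} : Set ℝ) ×ˢ (univ : Set ℝ)) := measure_mono hcov
        _ ≤ volume (⋃ j ∈ J, S j) + volume (({r₁} : Set ℝ) ×ˢ (univ : Set ℝ)) :=
            measure_union_le _ _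
        _ = ∑ j ∈ J, volume (S j) := by
            rw [h1, Measure.volume_eq_prod, Measure.prod_prod]
            simp
    · rw [← h1]
      exact measure_mono (Set.iUnion₂_mono hSsub)
  have hvolS : ∀ j ∈ J, volume (S j) =
      ENNReal.ofReal ((j : ℝ) - pp r₁ J j) * ENNReal.ofReal ((n : ℝ) - j - r₂) := by
    intro j _
    rw [hS, Measure.volume_eq_prod, Measure.prod_prod, Real.volume_Ioc, Real.volume_Icc]
  rw [HV, hvol, Finset.sum_congr rfl hvolS, ENNReal.toReal_sum (by
    intro j _
    exact ENNReal.mul_ne_top ENNReal.ofReal_ne_top ENNReal.ofReal_ne_top)]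
  refine Finset.sum_congr rfl fun j hj => ?_
  rw [ENNReal.toReal_mul, ENNReal.toReal_ofReal (by linarith [pp_le r₁ hr₁ J j]),
    ENNReal.toReal_ofReal (by
      have h1 : (j : ℝ) ≤ n := Nat.cast_le.2 (hle j hj)
      linarith)]

lemma key_sums (r₁ : ℝ) (J : Finset ℕ) : ∀ (h0 : 0 ∈ J),
    (∑ j ∈ J.erase 0, ((j : ℝ) - pp r₁ J j)) = ((J.max' ⟨0, h0⟩ : ℕ) : ℝ) ∧
    (∑ j ∈ J.erase 0, ((j : ℝ) - pp r₁ J j) * (j : ℝ)) =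
      (((J.max' ⟨0, h0⟩ : ℕ) : ℝ) ^ 2 + ∑ j ∈ J.erase 0, ((j : ℝ) - pp r₁ J j) ^ 2) / 2 := by
  classical
  induction J using Finset.strongInduction with
  | _ J IH =>
    intro h0
    have hne : J.Nonempty := ⟨0, h0⟩
    set M := J.max' hne with hM
    by_cases hJ : J = {0}
    · subst hJ
      simp [hM, Finset.max'_singleton]
    · have hM0 : M ≠ 0 := by
        intro h
        apply hJ
        apply Finset.eq_singleton_iff_unique_mem.2 ⟨h0, fun x hx => ?_⟩
        have := J.le_max' x hx
        omega
      have hMJ : M ∈ J := J.max'_mem hne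
      set J' := J.erase M with hJ'
      have h0' : 0 ∈ J' := Finset.mem_erase.2 ⟨fun h => hM0 h.symm, h0⟩
      have hne' : J'.Nonempty := ⟨0, h0'⟩
      have hsub : J' ⊂ J := Finset.erase_ssubset hMJ
      set M' := J'.max' hne' with hM'
      have hM'J : M' ∈ J := (Finset.mem_erase.1 (J'.max'_mem hne')).2
      have hM'M : M' < M := by
        have h1 := J.le_max' M' hM'J
        have h2 : M' ≠ M := (Finset.mem_erase.1 (J'.max'_mem hne')).1
        omega
      -- pp agrees on J' elements
      have hfilter : ∀ j ∈ J', J.filter (· < j) = J'.filter (· < j) := by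
        intro j hj
        have hjM : j ≤ M := J.le_max' j (Finset.mem_erase.1 hj).2
        rw [hJ', Finset.filter_erase, Finset.erase_eq_of_notMem]
        intro hmem
        have := (Finset.mem_filter.1 hmem).2
        beta_reduce at this
        omega
      have hppagree : ∀ j ∈ J', pp r₁ J j = pp r₁ J' j := by
        intro j hj
        rw [pp, pp, hfilter j hj]
      -- pp at M
      have hfiltM : J.filter (· < M) = J' := by
        ext k
        simp only [Finset.mem_filter, hJ', Finset.mem_erase]
        constructor
        · rintro ⟨hk, hlt⟩; exact ⟨by omega, hk⟩
        · rintro ⟨hk, hkJ⟩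
          have := J.le_max' k hkJ
          exact ⟨hkJ, by omega⟩
      have hppM : pp r₁ J M = (M' : ℝ) := by
        rw [pp, dif_pos (by rw [hfiltM]; exact hne')]
        congr 1
        have : (J.filter (· < M)).max' (by rw [hfiltM]; exact hne') = J'.max' hne' := by
          congr 1 <;> rw [hfiltM]
        rw [this]
      -- split the sums
      have hMer : M ∈ J.erase 0 := Finset.mem_erase.2 ⟨hM0, hMJ⟩
      have herase : J.erase 0 = insert M (J'.erase 0) := by
        rw [hJ', Finset.erase_right_comm, Finset.insert_erase hMer]
      have hMnot : M ∉ J'.erase 0 := fun h =>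
        (Finset.mem_erase.1 ((Finset.mem_erase.1 h).2)).1 rfl
      have hcongr1 : ∀ j ∈ J'.erase 0, ((j : ℝ) - pp r₁ J j) = ((j : ℝ) - pp r₁ J' j) :=
        fun j hj => by rw [hppagree j (Finset.mem_erase.1 hj).2]
      obtain ⟨ih1, ih2⟩ := IH J' hsub h0'
      constructor
      · rw [herase, Finset.sum_insert hMnot, Finset.sum_congr rfl hcongr1, ih1, hppM, ← hM']
        have : (M' : ℝ) ≤ M := Nat.cast_le.2 hM'M.le
        ring
      · rw [herase, Finset.sum_insert hMnot, Finset.sum_insert hMnot, hppM]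
        rw [show (∑ x ∈ J'.erase 0, ((x : ℝ) - pp r₁ J x) * (x : ℝ)) =
            ∑ x ∈ J'.erase 0, ((x : ℝ) - pp r₁ J' x) * (x : ℝ) from
          Finset.sum_congr rfl fun j hj => by rw [hppagree j (Finset.mem_erase.1 hj).2]]
        rw [show (∑ x ∈ J'.erase 0, ((x : ℝ) - pp r₁ J x) ^ 2) =
            ∑ x ∈ J'.erase 0, ((x : ℝ) - pp r₁ J' x) ^ 2 from
          Finset.sum_congr rfl fun j hj => by rw [hppagree j (Finset.mem_erase.1 hj).2]]
        rw [ih2, ← hM']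
        ring

lemma gap_ge_one (r₁ : ℝ) (J : Finset ℕ) (h0 : 0 ∈ J) {j : ℕ} (hj : j ∈ J.erase 0) :
    1 ≤ (j : ℝ) - pp r₁ J j := by
  obtain ⟨hj0, hjJ⟩ := Finset.mem_erase.1 hj
  have hne : (J.filter (· < j)).Nonempty :=
    ⟨0, Finset.mem_filter.2 ⟨h0, Nat.pos_of_ne_zero hj0⟩⟩
  rw [pp_eq_max' r₁ J j hne]
  have hlt : (J.filter (· < j)).max' hne < j :=
    (Finset.mem_filter.1 (Finset.max'_mem _ hne)).2
  have h1 : (J.filter (· < j)).max' hne + 1 ≤ j := hlt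
  have h2 : ((J.filter (· < j)).max' hne : ℝ) + 1 ≤ (j : ℝ) := by exact_mod_cast h1
  linarith

lemma HV_closed (n : ℕ) (J : Finset ℕ) (r₁ r₂ : ℝ) (hr₁ : r₁ ≤ 0) (hr₂ : r₂ ≤ 0)
    (h0 : 0 ∈ J) (hn : n ∈ J) (hle : ∀ j ∈ J, j ≤ n) :
    HV n J r₁ r₂ = (-r₁ * n - r₂ * n + r₁ * r₂ + (n : ℝ) ^ 2 / 2)
      - (∑ j ∈ J.erase 0, ((j : ℝ) - pp r₁ J j) ^ 2) / 2 := by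
  have hmax : J.max' ⟨0, h0⟩ = n :=
    le_antisymm (Finset.max'_le _ _ _ hle) (Finset.le_max' _ _ hn)
  obtain ⟨k1, k2⟩ := key_sums r₁ J h0
  rw [hmax] at k1 k2
  rw [HV_eq n J r₁ r₂ hr₁ hr₂ hle, ← Finset.add_sum_erase _ _ h0]
  have hsplit : ∀ j ∈ J.erase 0, ((j : ℝ) - pp r₁ J j) * ((n : ℝ) - j - r₂)
      = ((j : ℝ) - pp r₁ J j) * ((n : ℝ) - r₂) - ((j : ℝ) - pp r₁ J j) * (j : ℝ) :=
    fun j _ => by ring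
  rw [Finset.sum_congr rfl hsplit, Finset.sum_sub_distrib, ← Finset.sum_mul, k1, k2, pp_zero]
  push_cast
  ring

/-- Lemma 5: with `A = -r₁n - r₂n + r₁r₂ + n²/2` and `g = ⌈n/(N-1)⌉ = mei_opt(N)`,
(i) every `J ⊆ {0,…,n}` with `0, n ∈ J` and `|J| ≤ N` has `HV(J,r) ≤ A - n/(2(N-1))`,
and (ii) some such `J` has `HV(J,r) ≥ A - (N-1)·g²/2`. -/
theorem stmt9 (n N : ℕ) (hn : 1 ≤ n) (hN : 2 ≤ N)
    (r₁ r₂ : ℝ) (hr₁ : r₁ ≤ 0) (hr₂ : r₂ ≤ 0)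
    (A : ℝ) (hA : A = -r₁ * n - r₂ * n + r₁ * r₂ + (n : ℝ) ^ 2 / 2)
    (g : ℕ) (hg : (g : ℤ) = ⌈(n : ℚ) / ((N : ℚ) - 1)⌉) :
    (∀ J : Finset ℕ, (∀ j ∈ J, j ≤ n) → 0 ∈ J → n ∈ J → J.card ≤ N →
      HV n J r₁ r₂ ≤ A - (n : ℝ) / (2 * ((N : ℝ) - 1))) ∧
    (∃ J : Finset ℕ, (∀ j ∈ J, j ≤ n) ∧ 0 ∈ J ∧ n ∈ J ∧ J.card ≤ N ∧
      HV n J r₁ r₂ ≥ A - ((N : ℝ) - 1) * (g : ℝ) ^ 2 / 2) := by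
  have hN1 : (1 : ℝ) ≤ (N : ℝ) - 1 := by
    have : (2 : ℝ) ≤ N := by exact_mod_cast hN
    linarith
  constructor
  · intro J hle h0 hnJ _
    have k1 := (key_sums r₁ J h0).1
    have hmax : J.max' ⟨0, h0⟩ = n :=
      le_antisymm (Finset.max'_le _ _ _ hle) (Finset.le_max' _ _ hnJ)
    rw [hmax] at k1
    have hD : (n : ℝ) ≤ ∑ j ∈ J.erase 0, ((j : ℝ) - pp r₁ J j) ^ 2 := by
      rw [← k1]
      refine Finset.sum_le_sum fun j hj => ?_
      have h1 := gap_ge_one r₁ J h0 hj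
      nlinarith
    have hHV := HV_closed n J r₁ r₂ hr₁ hr₂ h0 hnJ hle
    have hdiv : (n : ℝ) / (2 * ((N : ℝ) - 1)) ≤ (n : ℝ) / 2 := by
      apply div_le_div_of_nonneg_left (Nat.cast_nonneg n) (by norm_num) (by linarith)
    rw [hHV, hA]
    linarith
  · -- construct the equally-spaced set
    have hg1 : 1 ≤ g := by
      have hpos : (0 : ℚ) < (n : ℚ) / ((N : ℚ) - 1) := by
        apply div_pos
        · exact_mod_cast hn
        · have : (2 : ℚ) ≤ N := by exact_mod_cast hN
          linarith
      have : (0 : ℤ) < ⌈(n : ℚ) / ((N : ℚ) - 1)⌉ := Int.ceil_pos.2 hpos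
      omega
    have hNQ : ((N : ℚ) - 1) = ((N - 1 : ℕ) : ℚ) := by
      have : (1 : ℕ) ≤ N := by omega
      push_cast [Nat.cast_sub this]
      ring
    have hNg : n ≤ (N - 1) * g := by
      have h1 : (n : ℚ) / ((N : ℚ) - 1) ≤ ((g : ℤ) : ℚ) := by
        rw [hg]; exact Int.le_ceil _
      have hposN : (0 : ℚ) < (N : ℚ) - 1 := by
        have : (2 : ℚ) ≤ N := by exact_mod_cast hN
        linarith
      have h2 : (n : ℚ) ≤ ((N : ℚ) - 1) * g := by
        rw [div_le_iff₀ hposN] at h1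
        push_cast at h1 ⊢
        linarith
      rw [hNQ] at h2
      exact_mod_cast h2
    set J : Finset ℕ := (Finset.range N).image (fun i => min (i * g) n) with hJ
    have h0J : 0 ∈ J := Finset.mem_image.2 ⟨0, Finset.mem_range.2 (by omega), by simp⟩
    have hnJ : n ∈ J := Finset.mem_image.2 ⟨N - 1, Finset.mem_range.2 (by omega),
      Nat.min_eq_right hNg⟩
    have hle : ∀ j ∈ J, j ≤ n := by
      intro j hj
      obtain ⟨i, _, hi⟩ := Finset.mem_image.1 hj
      omega
    have hcard : J.card ≤ N := le_trans Finset.card_image_le (by simp)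
    refine ⟨J, hle, h0J, hnJ, hcard, ?_⟩
    have hgap : ∀ j ∈ J.erase 0, (j : ℝ) - pp r₁ J j ≤ (g : ℝ) := by
      intro j hj
      obtain ⟨hj0, hjJ⟩ := Finset.mem_erase.1 hj
      have hj1 : 1 ≤ j := Nat.pos_of_ne_zero hj0
      have hjn : j ≤ n := hle j hjJ
      set i₀ := (j - 1) / g with hi₀
      set k := i₀ * g with hk
      have hkle : k ≤ j - 1 := Nat.div_mul_le_self (j - 1) g
      have hklt : k < j := by omega
      have hkn : k ≤ n := by omega
      have hi₀N : i₀ < N := by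
        have h1 : i₀ * g < (N - 1) * g := by omega
        have h2 : i₀ < N - 1 := lt_of_mul_lt_mul_right h1 (Nat.zero_le g)
        omega
      have hkJ : k ∈ J := Finset.mem_image.2 ⟨i₀, Finset.mem_range.2 hi₀N,
        Nat.min_eq_left hkn⟩
      have hjkg : j ≤ k + g := by
        have h1 := Nat.div_add_mod (j - 1) g
        rw [← hi₀] at h1
        have h2 : (j - 1) % g < g := Nat.mod_lt _ (by omega)
        have h3 : i₀ * g = g * i₀ := Nat.mul_comm _ _
        omega
      have hpk : (k : ℝ) ≤ pp r₁ J j := le_pp r₁ J hkJ hklt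
      have : (j : ℝ) ≤ (k : ℝ) + (g : ℝ) := by exact_mod_cast hjkg
      linarith
    have k1 := (key_sums r₁ J h0J).1
    have hmax : J.max' ⟨0, h0J⟩ = n :=
      le_antisymm (Finset.max'_le _ _ _ hle) (Finset.le_max' _ _ hnJ)
    rw [hmax] at k1
    have hD : (∑ j ∈ J.erase 0, ((j : ℝ) - pp r₁ J j) ^ 2) ≤ ((N : ℝ) - 1) * (g : ℝ) ^ 2 := by
      have hstep : (∑ j ∈ J.erase 0, ((j : ℝ) - pp r₁ J j) ^ 2)
          ≤ ∑ j ∈ J.erase 0, (g : ℝ) * ((j : ℝ) - pp r₁ J j) := by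
        refine Finset.sum_le_sum fun j hj => ?_
        have h1 := gap_ge_one r₁ J h0J hj
        have h2 := hgap j hj
        nlinarith
      have hsum : ∑ j ∈ J.erase 0, (g : ℝ) * ((j : ℝ) - pp r₁ J j) = (g : ℝ) * n := by
        rw [← Finset.mul_sum, k1]
      have hcast : (n : ℝ) ≤ ((N : ℝ) - 1) * (g : ℝ) := by
        have h1 : ((n : ℕ) : ℝ) ≤ (((N - 1) * g : ℕ) : ℝ) := Nat.cast_le.2 hNg
        have h2 : (((N - 1 : ℕ)) : ℝ) = (N : ℝ) - 1 := by
          have : (1 : ℕ) ≤ N := by omega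
          push_cast [Nat.cast_sub this]; ring
        push_cast at h1
        rw [← h2]
        push_cast
        linarith [h1]
      have hgnn : (0 : ℝ) ≤ g := Nat.cast_nonneg g
      nlinarith
    have hHV := HV_closed n J r₁ r₂ hr₁ hr₂ h0J hnJ hle
    rw [hHV, hA]
    linarith
end

section
/- Let n ≥ 7 be odd and N = (n+1)/2, and let c > 1 be a real number. Then the number of N-element subsets T of {1, …, n−1} such that mei(S_T) ≥ c·log_{3/2} n (as real numbers), where S_T := {0, n} ∪ ({1,…,n−1} \ T), is at most n^{1−c} · C(n−1, N). Equivalently, if T is uniform among N-element subsets of {1,…,n−1}, then Pr[mei(S_T) ≥ c·log_{3/2} n] ≤ n^{1−c}. (Tail bound of Lemma bigMEI.) -/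
/-- The set of first objective values surviving when the removed set is `T`:
`S_T = {0, n} ∪ ({1,…,n-1} \ T)`. -/
def STn (n : ℕ) (T : Finset ℕ) : Finset ℕ :=
  insert 0 (insert n ((Finset.Icc 1 (n - 1)) \ T))

/-- counting: subsets of `A` of size `N` containing `I` and disjoint from `B`. -/
lemma count_aux (A I B : Finset ℕ) (N : ℕ) :
    ((A.powersetCard N).filter (fun T => I ⊆ T ∧ Disjoint B T)).card
      ≤ ((A \ (I ∪ B)).card).choose (N - I.card) := by
  rw [← Finset.card_powersetCard]
  apply Finset.card_le_card_of_injOn (fun T => T \ I)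
  · intro T hT
    simp only [Finset.mem_coe, Finset.mem_filter, Finset.mem_powersetCard] at hT
    obtain ⟨⟨hTA, hTcard⟩, hIT, hBT⟩ := hT
    rw [Finset.mem_coe, Finset.mem_powersetCard]
    constructor
    · intro x hx
      rw [Finset.mem_sdiff] at hx ⊢
      refine ⟨hTA hx.1, ?_⟩
      rw [Finset.mem_union]
      rintro (h | h)
      · exact hx.2 h
      · exact Finset.disjoint_left.mp hBT h hx.1
    · rw [Finset.card_sdiff_of_subset hIT, hTcard]
  · intro T₁ h₁ T₂ h₂ h
    simp only [Finset.coe_filter, Set.mem_setOf_eq, Finset.mem_powersetCard] at h₁ h₂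
    have e₁ : T₁ = T₁ \ I ∪ I := (Finset.sdiff_union_of_subset h₁.2.1).symm
    have e₂ : T₂ = T₂ \ I ∪ I := (Finset.sdiff_union_of_subset h₂.2.1).symm
    simp only at h
    rw [e₁, e₂, h]

lemma choose_ratio (n N : ℕ) (hn : 7 ≤ n) (h2N : 2 * N = n + 1) :
    ∀ k, k ≤ N → (((n-1-k).choose (N-k) : ℝ)) ≤ (2/3)^k * ((n-1).choose N) := by
  intro k
  induction k with
  | zero => simp
  | succ k ih =>
    intro hk
    have hk' : k ≤ N := by omega
    have hid := Nat.add_one_mul_choose_eq (n-2-k) (N-k-1)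
    have e1 : n-2-k+1 = n-1-k := by omega
    have e2 : N-k-1+1 = N-k := by omega
    rw [e1, e2] at hid
    -- hid : (n-1-k) * (n-2-k).choose (N-k-1) = (n-1-k).choose (N-k) * (N-k)
    have h2 : 3 * (N - k) ≤ 2 * (n - 1 - k) := by omega
    have h3 : 3 * ((n-2-k).choose (N-k-1)) ≤ 2 * ((n-1-k).choose (N-k)) := by
      have hpos : 0 < n - 1 - k := by omega
      apply Nat.le_of_mul_le_mul_right _ hpos
      calc 3 * ((n-2-k).choose (N-k-1)) * (n-1-k)
          = 3 * ((n-1-k) * (n-2-k).choose (N-k-1)) := by ring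
        _ = 3 * ((n-1-k).choose (N-k) * (N-k)) := by rw [hid]
        _ ≤ (n-1-k).choose (N-k) * (2 * (n-1-k)) := by
            rw [mul_comm 3]
            rw [mul_assoc]
            exact Nat.mul_le_mul_left _ (by omega)
        _ = 2 * ((n-1-k).choose (N-k)) * (n-1-k) := by ring
    have h3' : ((n-2-k).choose (N-k-1) : ℝ) ≤ (2/3) * ((n-1-k).choose (N-k)) := by
      have := (Nat.cast_le (α := ℝ)).mpr h3
      push_cast at this
      linarith
    have e3 : n - 1 - (k+1) = n - 2 - k := by omega
    have e4 : N - (k+1) = N - k - 1 := by omega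
    rw [e3, e4]
    calc ((n-2-k).choose (N-k-1) : ℝ) ≤ (2/3) * ((n-1-k).choose (N-k)) := h3'
      _ ≤ (2/3) * ((2/3)^k * ((n-1).choose N)) := by
          have := ih hk'
          nlinarith
      _ = (2/3)^(k+1) * ((n-1).choose N) := by ring

lemma exists_run (n L : ℕ) (hL : 1 ≤ L) (T : Finset ℕ)
    (hT : T ⊆ Finset.Icc 1 (n-1)) (hmei : L ≤ mei (STn n T)) :
    ∃ j, j + L ≤ n ∧ Finset.Icc (j+1) (j+L-1) ⊆ T ∧ (j = 0 ∨ j ∉ T) := by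
  set S := STn n T with hS
  have hmem : ∀ x, x ∈ S ↔ x = 0 ∨ x = n ∨ (x ∈ Finset.Icc 1 (n-1) ∧ x ∉ T) := by
    intro x
    simp [hS, STn, Finset.mem_insert, Finset.mem_sdiff]
  obtain ⟨a, haS, hgap⟩ := (Finset.le_sup_iff (show ⊥ < L from hL)).mp hmei
  have hne : (S.filter (fun b => a < b)).Nonempty := by
    by_contra hemp
    rw [Finset.not_nonempty_iff_eq_empty] at hemp
    rw [gapAfter, hemp, Finset.min_empty] at hgap
    simp at hgap
    omega
  set b := (S.filter (fun b => a < b)).min' hne with hb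
  have hbmem := Finset.min'_mem _ hne
  rw [Finset.mem_filter] at hbmem
  have hgapb : L ≤ b - a := by
    rw [gapAfter, ← Finset.coe_min' hne, WithTop.untopD_coe] at hgap
    exact hgap
  have hbn : b ≤ n := by
    rcases (hmem b).mp hbmem.1 with h | h | h
    · omega
    · omega
    · have := Finset.mem_Icc.mp h.1; omega
  refine ⟨a, by omega, ?_, ?_⟩
  · intro x hx
    rw [Finset.mem_Icc] at hx
    by_contra hxT
    have hxS : x ∈ S := by
      rw [hmem]
      right; right
      exact ⟨Finset.mem_Icc.mpr ⟨by omega, by omega⟩, hxT⟩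
    have : b ≤ x := Finset.min'_le _ x (Finset.mem_filter.mpr ⟨hxS, by omega⟩)
    omega
  · rcases (hmem a).mp haS with h | h | h
    · left; exact h
    · exfalso; have := hbmem.2; omega
    · right; exact h.2

/-- Tail bound of Lemma `bigMEI`: for odd `n ≥ 7`, `N = (n+1)/2` and any constant
`c > 1`, the number of `N`-element subsets `T` of `{1,…,n-1}` with
`mei(S_T) ≥ c·log_{3/2} n` is at most `n^{1-c}·C(n-1, N)`. -/
theorem stmt12 (n N : ℕ) (hn : 7 ≤ n) (hodd : Odd n) (hN : N = (n + 1) / 2)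
    (c : ℝ) (hc : 1 < c) :
    (((((Finset.Icc 1 (n - 1)).powersetCard N).filter
        (fun T => c * Real.logb (3 / 2) n ≤ (mei (STn n T) : ℝ))).card : ℝ))
      ≤ (n : ℝ) ^ ((1 : ℝ) - c) * ((n - 1).choose N : ℝ) := by
  classical
  have h2N : 2 * N = n + 1 := by obtain ⟨m, hm⟩ := hodd; omega
  have hnpos : (0:ℝ) < n := by
    have : (0:ℕ) < n := by omega
    exact_mod_cast this
  have hn1 : (1:ℝ) < n := by
    have : (1:ℕ) < n := by omega
    exact_mod_cast this
  set x := c * Real.logb (3 / 2) n with hxdef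
  have hlogpos : 0 < Real.logb (3 / 2) (n:ℝ) := Real.logb_pos (by norm_num) hn1
  have hxpos : 0 < x := mul_pos (by linarith) hlogpos
  set L := ⌈x⌉₊ with hLdef
  have hL1 : 1 ≤ L := Nat.ceil_pos.mpr hxpos
  set A := Finset.Icc 1 (n-1) with hA
  set F := ((A.powersetCard N).filter
        (fun T => c * Real.logb (3 / 2) n ≤ (mei (STn n T) : ℝ))) with hF
  have hFmem : ∀ T ∈ F, T ⊆ A ∧ T.card = N ∧ L ≤ mei (STn n T) := by
    intro T hT
    rw [hF, Finset.mem_filter, Finset.mem_powersetCard] at hT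
    exact ⟨hT.1.1, hT.1.2, Nat.ceil_le.mpr hT.2⟩
  show (F.card : ℝ) ≤ _
  rcases Finset.eq_empty_or_nonempty F with hFe | ⟨T₀, hT₀⟩
  · rw [hFe]
    simp only [Finset.card_empty, Nat.cast_zero]
    positivity
  obtain ⟨hT₀sub, hT₀card, hT₀mei⟩ := hFmem T₀ hT₀
  obtain ⟨j₀, hj₀n, hj₀sub, hj₀or⟩ := exists_run n L hL1 T₀ hT₀sub hT₀mei
  have hLn : L ≤ n := by omega
  set k := L - 1 with hk
  have hkN : k ≤ N := by
    have h1 := Finset.card_le_card hj₀sub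
    rw [Nat.card_Icc] at h1
    omega
  have hNn : N ≤ n - 2 := by omega
  set G := fun j => ((A.powersetCard N).filter
      (fun T => Finset.Icc (j+1) (j+L-1) ⊆ T ∧ Disjoint (if j = 0 then (∅:Finset ℕ) else {j}) T))
    with hG
  have hsub : F ⊆ (Finset.range (n - L + 1)).biUnion G := by
    intro T hT
    obtain ⟨hTsub, hTcard, hTmei⟩ := hFmem T hT
    obtain ⟨j, hjn, hjsub, hjor⟩ := exists_run n L hL1 T hTsub hTmei
    rw [Finset.mem_biUnion]
    refine ⟨j, Finset.mem_range.mpr (by omega), ?_⟩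
    rw [hG, Finset.mem_filter, Finset.mem_powersetCard]
    refine ⟨⟨hTsub, hTcard⟩, hjsub, ?_⟩
    rcases eq_or_ne j 0 with h0 | h0
    · simp [h0]
    · rw [if_neg h0, Finset.disjoint_singleton_left]
      rcases hjor with h | h
      · exact absurd h h0
      · exact h
  have hGbound : ∀ j ∈ Finset.range (n - L + 1),
      (G j).card ≤ if j = 0 then (n-1-k).choose (N-k) else (n-2-k).choose (N-k) := by
    intro j hj
    simp only [hG]
    rw [Finset.mem_range] at hj
    have hIsub : Finset.Icc (j+1) (j+L-1) ⊆ A := by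
      intro y hy
      rw [Finset.mem_Icc] at hy
      rw [hA, Finset.mem_Icc]
      omega
    have hIcard : (Finset.Icc (j+1) (j+L-1)).card = k := by
      rw [Nat.card_Icc]; omega
    have hbase := count_aux A (Finset.Icc (j+1) (j+L-1)) (if j = 0 then (∅:Finset ℕ) else {j}) N
    rw [hIcard] at hbase
    rcases eq_or_ne j 0 with h0 | h0
    · rw [if_pos h0] at hbase ⊢
      rw [if_pos h0]
      rw [Finset.union_empty] at hbase
      have hcd : (A \ Finset.Icc (j+1) (j+L-1)).card = n - 1 - k := by
        rw [Finset.card_sdiff_of_subset hIsub, hIcard, hA, Nat.card_Icc]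
        omega
      rw [hcd] at hbase
      exact hbase
    · rw [if_neg h0] at hbase ⊢
      rw [if_neg h0]
      have hjA : j ∈ A := by
        rw [hA, Finset.mem_Icc]; omega
      have hUsub : Finset.Icc (j+1) (j+L-1) ∪ {j} ⊆ A :=
        Finset.union_subset hIsub (Finset.singleton_subset_iff.mpr hjA)
      have hUcard : (Finset.Icc (j+1) (j+L-1) ∪ {j}).card = k + 1 := by
        rw [Finset.card_union_of_disjoint, hIcard, Finset.card_singleton]
        rw [Finset.disjoint_singleton_right, Finset.mem_Icc]
        omega
      have hcd : (A \ (Finset.Icc (j+1) (j+L-1) ∪ {j})).card = n - 2 - k := by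
        rw [Finset.card_sdiff_of_subset hUsub, hUcard, hA, Nat.card_Icc]
        omega
      rw [hcd] at hbase
      exact hbase
  have hcard1 : F.card ≤ (n-1-k).choose (N-k) + (n-L) * (n-2-k).choose (N-k) := by
    calc F.card ≤ ((Finset.range (n - L + 1)).biUnion G).card := Finset.card_le_card hsub
      _ ≤ ∑ j ∈ Finset.range (n - L + 1), (G j).card := Finset.card_biUnion_le
      _ = ∑ j ∈ Finset.range (n - L), (G (j+1)).card + (G 0).card := Finset.sum_range_succ' _ _
      _ ≤ (n-L) * (n-2-k).choose (N-k) + (n-1-k).choose (N-k) := by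
          apply add_le_add
          · have := Finset.sum_le_card_nsmul (Finset.range (n-L)) (fun j => (G (j+1)).card)
              ((n-2-k).choose (N-k)) (by
                intro y hy
                have := hGbound (y+1) (by rw [Finset.mem_range] at hy ⊢; omega)
                rw [if_neg (Nat.succ_ne_zero y)] at this
                exact this)
            simpa [Finset.card_range, smul_eq_mul] using this
          · have := hGbound 0 (by rw [Finset.mem_range]; omega)
            rw [if_pos rfl] at this
            exact this
      _ = _ := by ring
  have hid : (n-1-k).choose (N-k) + (n-L) * (n-2-k).choose (N-k)
      = (n - N) * ((n-1-k).choose (N-k)) := by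
    have h := Nat.choose_mul_succ_eq (n-2-k) (N-k)
    have e1 : n-2-k+1 = n-1-k := by omega
    rw [e1] at h
    have e2 : n-1-k - (N-k) = n-1-N := by omega
    rw [e2] at h
    have e3 : n - L = n - 1 - k := by omega
    rw [e3]
    calc (n-1-k).choose (N-k) + (n-1-k) * (n-2-k).choose (N-k)
        = (n-1-k).choose (N-k) + (n-2-k).choose (N-k) * (n-1-k) := by ring
      _ = (n-1-k).choose (N-k) + (n-1-k).choose (N-k) * (n-1-N) := by rw [h]
      _ = (n - N) * ((n-1-k).choose (N-k)) := by
          have e4 : n - N = n-1-N+1 := by omega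
          rw [e4]; ring
  have hreal : (F.card : ℝ) ≤ ((n - N : ℕ) : ℝ) * ((2/3)^k * ((n-1).choose N)) := by
    have hc1 : (F.card : ℝ) ≤ ((n - N : ℕ) : ℝ) * (((n-1-k).choose (N-k) : ℕ) : ℝ) := by
      have := hcard1.trans (le_of_eq hid)
      exact_mod_cast this
    refine hc1.trans ?_
    have := choose_ratio n N hn h2N k hkN
    have hnn : (0:ℝ) ≤ ((n - N : ℕ) : ℝ) := by positivity
    exact mul_le_mul_of_nonneg_left this hnn
  have hcastnN : ((n - N : ℕ) : ℝ) = ((n:ℝ) - 1)/2 := by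
    have hNn' : N ≤ n := by omega
    rw [Nat.cast_sub hNn']
    have : 2 * (N:ℝ) = (n:ℝ) + 1 := by exact_mod_cast h2N
    linarith
  have hCpos : (0:ℝ) ≤ (((n-1).choose N : ℕ) : ℝ) := by positivity
  have hpow : (((n:ℝ) - 1)/2) * (2/3:ℝ)^k ≤ (n:ℝ)^((1:ℝ)-c) := by
    have hxleL : x ≤ (L:ℝ) := Nat.le_ceil x
    have hnc : (n:ℝ)^c ≤ (3/2:ℝ)^L := by
      have h2 : (n:ℝ)^c = (3/2:ℝ)^x := by
        rw [hxdef, mul_comm, Real.rpow_mul (by norm_num : (0:ℝ) ≤ 3/2),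
          Real.rpow_logb (by norm_num) (by norm_num) hnpos]
      rw [h2, ← Real.rpow_natCast (3/2:ℝ) L]
      exact (Real.rpow_le_rpow_left_iff (by norm_num)).mpr hxleL
    have h23 : ((2:ℝ)/3)^L ≤ (n:ℝ)^(-c) := by
      rw [Real.rpow_neg (le_of_lt hnpos)]
      have he : ((2:ℝ)/3)^L = ((3/2:ℝ)^L)⁻¹ := by
        rw [← inv_pow]; norm_num
      rw [he]
      exact inv_anti₀ (Real.rpow_pos_of_pos hnpos c) hnc
    have hkL : (2/3:ℝ)^k = (3/2) * (2/3)^L := by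
      have hLk : L = k + 1 := by omega
      rw [hLk, pow_succ]
      ring
    have h1c : (n:ℝ)^((1:ℝ)-c) = n * (n:ℝ)^(-c) := by
      rw [sub_eq_add_neg, Real.rpow_add hnpos, Real.rpow_one]
    rw [hkL, h1c]
    have hfac : ((n:ℝ)-1)/2 * (3/2) ≤ n := by linarith
    calc ((n:ℝ)-1)/2 * ((3/2)*(2/3)^L) = (((n:ℝ)-1)/2 * (3/2)) * (2/3)^L := by ring
      _ ≤ (n:ℝ) * (n:ℝ)^(-c) := by
          apply mul_le_mul hfac h23 (by positivity) (by positivity)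
  calc (F.card : ℝ) ≤ ((n - N : ℕ) : ℝ) * ((2/3)^k * ((n-1).choose N)) := hreal
    _ = ((((n:ℝ) - 1)/2) * (2/3:ℝ)^k) * ((n-1).choose N) := by rw [hcastnN]; ring
    _ ≤ (n:ℝ)^((1:ℝ)-c) * ((n-1).choose N) := by
        apply mul_le_mul_of_nonneg_right hpow hCpos
end

section
/- Let n, i₁, i₂ be integers with 1 ≤ i₁, i₁ + 2 ≤ i₂, and i₂ ≤ n − 1. Then there exists an integer i₃ with i₁ < i₃ < i₂ such that both (i₂ − i₃)/(n − i₂) ≥ (i₂ − i₁ − 1)/(n − (i₂ − i₁)) and (i₃ − i₁)/i₁ ≥ (i₂ − i₁ − 1)/(n − (i₂ − i₁)). (Intermediate claim in the proof of Lemma 3: any point (i₃, n−i₃) strictly between two consecutive covered points (i₁, n−i₁) and (i₂, n−i₂) forces ε ≥ min{(i₂−i₃)/(n−i₂), (i₃−i₁)/i₁}, and a suitable integer choice of i₃ makes this minimum at least (i₂−i₁−1)/(n−(i₂−i₁)).) -/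
/-- Intermediate claim in the proof of Lemma 3: for integers `1 ≤ i₁`,
`i₁ + 2 ≤ i₂ ≤ n - 1`, there is an integer `i₃` with `i₁ < i₃ < i₂` such that
both `(i₂ - i₃)/(n - i₂)` and `(i₃ - i₁)/i₁` are at least
`(i₂ - i₁ - 1)/(n - (i₂ - i₁))`. -/
theorem stmt16 (n i₁ i₂ : ℤ) (h1 : 1 ≤ i₁) (h2 : i₁ + 2 ≤ i₂) (h3 : i₂ ≤ n - 1) :
    ∃ i₃ : ℤ, i₁ < i₃ ∧ i₃ < i₂ ∧
      ((i₂ : ℝ) - (i₃ : ℝ)) / ((n : ℝ) - (i₂ : ℝ))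
        ≥ ((i₂ : ℝ) - (i₁ : ℝ) - 1) / ((n : ℝ) - ((i₂ : ℝ) - (i₁ : ℝ))) ∧
      ((i₃ : ℝ) - (i₁ : ℝ)) / (i₁ : ℝ)
        ≥ ((i₂ : ℝ) - (i₁ : ℝ) - 1) / ((n : ℝ) - ((i₂ : ℝ) - (i₁ : ℝ))) := by
  have hB : (0:ℝ) < (i₁ : ℝ) := by exact_mod_cast (by omega : (0:ℤ) < i₁)
  have hA : (0:ℝ) < (n : ℝ) - i₂ := by
    have : (i₂:ℝ) < (n:ℝ) := by exact_mod_cast (by omega : i₂ < n)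
    linarith
  have hd : (1:ℝ) ≤ (i₂:ℝ) - i₁ - 1 := by
    have : (i₁:ℝ) + 2 ≤ (i₂:ℝ) := by exact_mod_cast h2
    linarith
  have hden : (0:ℝ) < (n:ℝ) - i₂ + i₁ := by linarith
  set d : ℝ := (i₂:ℝ) - i₁ - 1 with hd_def
  set x : ℝ := d * i₁ / ((n:ℝ) - i₂ + i₁) with hx_def
  have hx_pos : 0 < x := div_pos (by positivity) hden
  have hx_le : x ≤ d := by
    rw [hx_def, div_le_iff₀ hden]
    nlinarith
  have hxmul : x * ((n:ℝ) - i₂ + i₁) = d * i₁ := by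
    rw [hx_def, div_mul_cancel₀]
    exact ne_of_gt hden
  have hceil_pos : 0 < ⌈x⌉ := Int.ceil_pos.mpr hx_pos
  have hceil_le : ⌈x⌉ ≤ i₂ - i₁ - 1 := by
    refine Int.ceil_le.mpr ?_
    have : ((i₂ - i₁ - 1 : ℤ):ℝ) = d := by push_cast; ring
    rw [this]; exact hx_le
  have hle_ceil : x ≤ (⌈x⌉ : ℝ) := Int.le_ceil x
  have hceil_lt : (⌈x⌉ : ℝ) < x + 1 := Int.ceil_lt_add_one x
  refine ⟨i₁ + ⌈x⌉, by omega, by omega, ?_, ?_⟩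
  · rw [ge_iff_le, div_le_div_iff₀ (by linarith) hA]
    push_cast
    nlinarith
  · rw [ge_iff_le, div_le_div_iff₀ (by linarith) hB]
    push_cast
    nlinarith
end
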